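/- arXiv:1104.4630 — 3 statements merged into one kernel-verified Lean document; each statement's English description precedes it below -/
import Mathlib

section
/- Volkov's pentagon identity (quantum dilogarithm identity in universal form for type A₂): let 𝒜 be a complex unital Banach algebra, q ∈ ℂ with 0 < |q| < 1, and X, Y ∈ 𝒜 with Y·X = q²·X·Y, ‖X‖ < 1/4 and ‖Y‖ < 1/4. Then 1 + qY, 1 + qX and 1 + qX + qY are invertible, the elements X(1+qY)^{−1}, qX(1+qX+qY)^{−1}Y, (1+qX)^{−1}Y, X, Y all have norm < 1, the corresponding values of Ψ_q are invertible, and Ψ_q(X(1+qY)^{−1})^{−1} · Ψ_q(qX(1+qX+qY)^{−1}Y)^{−1} · Ψ_q((1+qX)^{−1}Y)^{−1} · Ψ_q(X) · Ψ_q(Y) = 1. -/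
/-- The quantum dilogarithm `Ψ_q(W) = Σₙ (-q)ⁿ Wⁿ / ∏_{k=1}^n (1 - q^{2k})` of an
element `W` of a complex unital Banach algebra, for `0 < |q| < 1` and `‖W‖ < 1/|q|`. -/
noncomputable def quantumPsiB {A : Type*} [NormedRing A] [NormedAlgebra ℂ A]
    (q : ℂ) (W : A) : A :=
  ∑' n : ℕ, ((-q) ^ n / ∏ k ∈ Finset.range n, (1 - q ^ (2 * (k + 1)))) • W ^ n

namespace VolkovAux

open Finset

lemma weier (f : ℕ → ℝ) (hf0 : ∀ k, 0 ≤ f k) (hf1 : ∀ k, f k ≤ 1) (n : ℕ) :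
    1 - ∑ k ∈ range n, f k ≤ ∏ k ∈ range n, (1 - f k) := by
  induction n with
  | zero => simp
  | succ n ih =>
    rw [Finset.prod_range_succ, Finset.sum_range_succ]
    have hprod : 1 - ∑ k ∈ range n, f k ≤ ∏ k ∈ range n, (1 - f k) := ih
    have hsum : 0 ≤ ∑ k ∈ range n, f k := Finset.sum_nonneg fun k _ => hf0 k
    have h1 : 0 ≤ 1 - f n := by linarith [hf1 n]
    nlinarith [mul_le_mul_of_nonneg_right hprod h1, hf0 n]

lemma geom_partial {s : ℝ} (h0 : 0 ≤ s) (h1 : s < 1) (n : ℕ) :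
    ∑ k ∈ range n, s ^ k ≤ (1 - s)⁻¹ := by
  calc ∑ k ∈ range n, s ^ k ≤ ∑' k : ℕ, s ^ k :=
        Summable.sum_le_tsum (range n) (fun k _ => pow_nonneg h0 k)
          (summable_geometric_of_lt_one h0 h1)
    _ = (1 - s)⁻¹ := tsum_geometric_of_lt_one h0 h1

lemma exists_lb {t s : ℝ} (ht0 : 0 ≤ t) (ht1 : t < 1) (hs0 : 0 ≤ s) (hs1 : s < 1) :
    ∃ c : ℝ, 0 < c ∧ ∀ n, c ≤ ∏ k ∈ range n, (1 - t * s ^ k) := by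
  have hfac : ∀ k, 0 < 1 - t * s ^ k := by
    intro k
    have h1 : s ^ k ≤ 1 := pow_le_one₀ hs0 hs1.le
    nlinarith [pow_nonneg hs0 k]
  have hfac1 : ∀ k, 1 - t * s ^ k ≤ 1 := by
    intro k
    nlinarith [pow_nonneg hs0 k]
  have hspos : (0:ℝ) < 1 - s := by linarith
  obtain ⟨K, hK⟩ : ∃ K : ℕ, s ^ K < (1 - s) / (2 * (t + 1)) :=
    exists_pow_lt_of_lt_one (div_pos hspos (by linarith)) hs1
  have hKs : t * s ^ K * (1 - s)⁻¹ ≤ 1 / 2 := by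
    have h2 : t * s ^ K ≤ (1 - s) / 2 := by
      rw [lt_div_iff₀ (by linarith : (0:ℝ) < 2 * (t + 1))] at hK
      nlinarith [pow_nonneg hs0 K]
    calc t * s ^ K * (1 - s)⁻¹ ≤ (1 - s) / 2 * (1 - s)⁻¹ :=
          mul_le_mul_of_nonneg_right h2 (by positivity)
      _ = 1 / 2 := by field_simp
  have hprodK : 0 < ∏ k ∈ range K, (1 - t * s ^ k) :=
    Finset.prod_pos fun k _ => hfac k
  refine ⟨(∏ k ∈ range K, (1 - t * s ^ k)) * (1 / 2), by positivity, fun n => ?_⟩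
  rcases le_or_gt n K with hn | hn
  · have h2 : ∏ k ∈ range K, (1 - t * s ^ k) ≤ ∏ k ∈ range n, (1 - t * s ^ k) := by
      rw [← Finset.prod_range_mul_prod_Ico _ hn]
      have hIco : ∏ k ∈ Finset.Ico n K, (1 - t * s ^ k) ≤ 1 :=
        Finset.prod_le_one (fun k _ => (hfac k).le) (fun k _ => hfac1 k)
      have hp : 0 < ∏ k ∈ range n, (1 - t * s ^ k) :=
        Finset.prod_pos fun k _ => hfac k
      nlinarith
    nlinarith
  · rw [← Finset.prod_range_mul_prod_Ico _ hn.le]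
    have htail : (1:ℝ) / 2 ≤ ∏ k ∈ Finset.Ico K n, (1 - t * s ^ k) := by
      rw [Finset.prod_Ico_eq_prod_range]
      have hW := weier (fun j => t * s ^ (K + j))
        (fun j => by show (0:ℝ) ≤ t * s ^ (K + j); positivity)
        (fun j => by
          show t * s ^ (K + j) ≤ 1
          have h1 : s ^ (K + j) ≤ 1 := pow_le_one₀ hs0 hs1.le
          nlinarith [pow_nonneg hs0 (K + j)]) (n - K)
      have hsum : ∑ j ∈ range (n - K), t * s ^ (K + j) ≤ 1 / 2 := by
        have : ∑ j ∈ range (n - K), t * s ^ (K + j)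
            = t * s ^ K * ∑ j ∈ range (n - K), s ^ j := by
          rw [Finset.mul_sum]
          congr 1; ext j; rw [pow_add]; ring
        rw [this]
        calc t * s ^ K * ∑ j ∈ range (n - K), s ^ j
            ≤ t * s ^ K * (1 - s)⁻¹ := by
              apply mul_le_mul_of_nonneg_left (geom_partial hs0 hs1 _) (by positivity)
          _ ≤ 1 / 2 := hKs
      calc (1:ℝ)/2 ≤ 1 - ∑ j ∈ range (n - K), t * s ^ (K + j) := by linarith
        _ ≤ _ := hW
    nlinarith [hprodK, Finset.prod_pos (fun k (_ : k ∈ Finset.Ico K n) => hfac k)]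


/-- The q-Pochhammer-type denominator. -/
noncomputable def Pq (q : ℂ) (n : ℕ) : ℂ := ∏ k ∈ range n, (1 - q ^ (2 * (k + 1)))

/-- The coefficients of the quantum dilogarithm. -/
noncomputable def aq (q : ℂ) (n : ℕ) : ℂ := (-q) ^ n / Pq q n

variable {q : ℂ}

lemma qpow_ne_one (hq1 : ‖q‖ < 1) {m : ℕ} (hm : 0 < m) : q ^ m ≠ 1 := by
  intro h
  have : ‖q ^ m‖ < 1 := by
    rw [norm_pow]
    exact pow_lt_one₀ (norm_nonneg q) hq1 hm.ne'
  rw [h, norm_one] at this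
  exact lt_irrefl _ this

lemma Pq_factor_ne (hq1 : ‖q‖ < 1) (k : ℕ) : (1 : ℂ) - q ^ (2 * (k + 1)) ≠ 0 := by
  intro h
  have : q ^ (2 * (k + 1)) = 1 := by linear_combination -h
  exact qpow_ne_one hq1 (by positivity) this

lemma Pq_ne (hq1 : ‖q‖ < 1) (n : ℕ) : Pq q n ≠ 0 :=
  Finset.prod_ne_zero_iff.2 fun k _ => Pq_factor_ne hq1 k

lemma Pq_succ (n : ℕ) : Pq q (n + 1) = Pq q n * (1 - q ^ (2 * (n + 1))) :=
  Finset.prod_range_succ _ _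

lemma aq_zero : aq q 0 = 1 := by simp [aq, Pq]

lemma aq_succ_key (hq1 : ‖q‖ < 1) (n : ℕ) :
    aq q (n + 1) * (q ^ 2) ^ (n + 1) - aq q (n + 1) = q * aq q n := by
  have hp := Pq_ne hq1 (q := q) n
  have hd := Pq_factor_ne hq1 (q := q) n
  have hq2 : (q ^ 2) ^ (n + 1) = q ^ (2 * (n + 1)) := by
    rw [← pow_mul]
  rw [aq, aq, Pq_succ, hq2]
  field_simp
  ring

lemma norm_Pq_lb (hq1 : ‖q‖ < 1) : ∃ c : ℝ, 0 < c ∧ ∀ n, c ≤ ‖Pq q n‖ := by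
  have hs0 : (0:ℝ) ≤ ‖q‖ ^ 2 := by positivity
  have hs1 : ‖q‖ ^ 2 < 1 := pow_lt_one₀ (norm_nonneg q) hq1 two_ne_zero
  obtain ⟨c, hc0, hc⟩ := exists_lb hs0 hs1 hs0 hs1
  refine ⟨c, hc0, fun n => (hc n).trans ?_⟩
  rw [Pq, norm_prod]
  apply Finset.prod_le_prod
  · intro k _
    have h1 : (‖q‖ ^ 2) ^ k ≤ 1 := pow_le_one₀ hs0 hs1.le
    nlinarith [pow_nonneg hs0 k]
  · intro k _
    have he : ‖q‖ ^ 2 * (‖q‖ ^ 2) ^ k = ‖q ^ (2 * (k + 1))‖ := by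
      rw [norm_pow, ← pow_succ', ← pow_mul]
    rw [he]
    calc 1 - ‖q ^ (2 * (k + 1))‖ = ‖(1:ℂ)‖ - ‖q ^ (2 * (k + 1))‖ := by rw [norm_one]
      _ ≤ ‖1 - q ^ (2 * (k + 1))‖ := norm_sub_norm_le _ _

lemma norm_aq_le (hq1 : ‖q‖ < 1) {c : ℝ} (hc0 : 0 < c) (hc : ∀ n, c ≤ ‖Pq q n‖) (n : ℕ) :
    ‖aq q n‖ ≤ c⁻¹ * ‖q‖ ^ n := by
  rw [aq, norm_div, norm_pow, norm_neg]
  rw [div_le_iff₀ (lt_of_lt_of_le hc0 (hc n))]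
  calc ‖q‖ ^ n = c⁻¹ * ‖q‖ ^ n * c := by field_simp
    _ ≤ c⁻¹ * ‖q‖ ^ n * ‖Pq q n‖ := by
        apply mul_le_mul_of_nonneg_left (hc n) (by positivity)

section banach

variable {A : Type*} [NormedRing A] [NormedAlgebra ℂ A] [CompleteSpace A]

lemma term_norm_le (hq1 : ‖q‖ < 1) {c : ℝ} (hc0 : 0 < c) (hc : ∀ n, c ≤ ‖Pq q n‖)
    (W : A) (n : ℕ) :
    ‖aq q (n + 1) • W ^ (n + 1)‖ ≤ c⁻¹ * (‖q‖ * ‖W‖) ^ (n + 1) := by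
  rw [norm_smul, mul_pow]
  calc ‖aq q (n+1)‖ * ‖W ^ (n+1)‖ ≤ (c⁻¹ * ‖q‖ ^ (n+1)) * ‖W‖ ^ (n+1) := by
        apply mul_le_mul (norm_aq_le hq1 hc0 hc (n+1)) (norm_pow_le' W n.succ_pos)
          (norm_nonneg _) (by positivity)
    _ = c⁻¹ * (‖q‖ ^ (n+1) * ‖W‖ ^ (n+1)) := by ring

lemma summable_psi (hq1 : ‖q‖ < 1) (W : A) (hW : ‖q‖ * ‖W‖ < 1) :
    Summable (fun n => aq q n • W ^ n) := by
  obtain ⟨c, hc0, hc⟩ := norm_Pq_lb (q := q) hq1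
  rw [← summable_nat_add_iff 1]
  have hr0 : 0 ≤ ‖q‖ * ‖W‖ := by positivity
  have hg : Summable (fun n : ℕ => c⁻¹ * ((‖q‖ * ‖W‖) * (‖q‖ * ‖W‖) ^ n)) :=
    ((summable_geometric_of_lt_one hr0 hW).mul_left _).mul_left _
  apply Summable.of_norm_bounded hg
  intro n
  calc ‖aq q (n+1) • W ^ (n+1)‖ ≤ c⁻¹ * (‖q‖ * ‖W‖) ^ (n+1) := term_norm_le hq1 hc0 hc W n
    _ = c⁻¹ * ((‖q‖ * ‖W‖) * (‖q‖ * ‖W‖) ^ n) := by rw [pow_succ']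

lemma psi_eq (W : A) : quantumPsiB q W = ∑' n, aq q n • W ^ n := rfl

lemma norm_mul_pow_le (x z : A) (n : ℕ) : ‖x ^ n * z‖ ≤ ‖x‖ ^ n * ‖z‖ := by
  cases n with
  | zero => simp
  | succ n =>
    calc ‖x ^ (n+1) * z‖ ≤ ‖x ^ (n+1)‖ * ‖z‖ := norm_mul_le _ _
      _ ≤ ‖x‖ ^ (n+1) * ‖z‖ :=
        mul_le_mul_of_nonneg_right (norm_pow_le' _ n.succ_pos) (norm_nonneg z)

lemma norm_pow_mul_le (x z : A) (n : ℕ) : ‖z * x ^ n‖ ≤ ‖z‖ * ‖x‖ ^ n := by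
  cases n with
  | zero => simp
  | succ n =>
    calc ‖z * x ^ (n+1)‖ ≤ ‖z‖ * ‖x ^ (n+1)‖ := norm_mul_le _ _
      _ ≤ ‖z‖ * ‖x‖ ^ (n+1) :=
        mul_le_mul_of_nonneg_left (norm_pow_le' _ n.succ_pos) (norm_nonneg z)

lemma norm_sand_pow_le (x z y : A) (n : ℕ) : ‖z * x ^ n * y‖ ≤ ‖z‖ * ‖x‖ ^ n * ‖y‖ := by
  calc ‖z * x ^ n * y‖ ≤ ‖z * x ^ n‖ * ‖y‖ := norm_mul_le _ _
    _ ≤ ‖z‖ * ‖x‖ ^ n * ‖y‖ :=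
      mul_le_mul_of_nonneg_right (norm_pow_mul_le x z n) (norm_nonneg y)

lemma inv_mul_norm_le (x z : A) (hx : ‖x‖ < 1) :
    ‖Ring.inverse (1 - x) * z‖ ≤ (1 - ‖x‖)⁻¹ * ‖z‖ := by
  have hgs := summable_geometric_of_norm_lt_one hx
  have hb : ∀ n, ‖x ^ n * z‖ ≤ ‖x‖ ^ n * ‖z‖ := fun n => norm_mul_pow_le x z n
  have hgr : Summable (fun n : ℕ => ‖x‖ ^ n * ‖z‖) :=
    (summable_geometric_of_lt_one (norm_nonneg x) hx).mul_right _
  rw [← geom_series_eq_inverse x hx, ← Summable.tsum_mul_right z hgs]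
  calc ‖∑' n, x ^ n * z‖ ≤ ∑' n, ‖x‖ ^ n * ‖z‖ := by
        apply tsum_of_norm_bounded hgr.hasSum hb
    _ = (1 - ‖x‖)⁻¹ * ‖z‖ := by
        rw [Summable.tsum_mul_right _ (summable_geometric_of_lt_one (norm_nonneg x) hx),
          tsum_geometric_of_lt_one (norm_nonneg x) hx]

lemma mul_inv_norm_le (x z : A) (hx : ‖x‖ < 1) :
    ‖z * Ring.inverse (1 - x)‖ ≤ ‖z‖ * (1 - ‖x‖)⁻¹ := by
  have hgs := summable_geometric_of_norm_lt_one hx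
  have hgr : Summable (fun n : ℕ => ‖z‖ * ‖x‖ ^ n) :=
    (summable_geometric_of_lt_one (norm_nonneg x) hx).mul_left _
  rw [← geom_series_eq_inverse x hx, ← Summable.tsum_mul_left z hgs]
  calc ‖∑' n, z * x ^ n‖ ≤ ∑' n, ‖z‖ * ‖x‖ ^ n := by
        apply tsum_of_norm_bounded hgr.hasSum (fun n => norm_pow_mul_le x z n)
    _ = ‖z‖ * (1 - ‖x‖)⁻¹ := by
        rw [Summable.tsum_mul_left _ (summable_geometric_of_lt_one (norm_nonneg x) hx),
          tsum_geometric_of_lt_one (norm_nonneg x) hx]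

lemma sand_inv_norm_le (x z y : A) (hx : ‖x‖ < 1) :
    ‖z * Ring.inverse (1 - x) * y‖ ≤ ‖z‖ * (1 - ‖x‖)⁻¹ * ‖y‖ := by
  have hgs := summable_geometric_of_norm_lt_one hx
  have hgr : Summable (fun n : ℕ => ‖z‖ * ‖x‖ ^ n * ‖y‖) :=
    (((summable_geometric_of_lt_one (norm_nonneg x) hx).mul_left ‖z‖).mul_right ‖y‖).congr
      (fun n => by ring)
  rw [← geom_series_eq_inverse x hx, ← Summable.tsum_mul_left z hgs,
    ← Summable.tsum_mul_right y (hgs.mul_left z)]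
  calc ‖∑' n, z * x ^ n * y‖ ≤ ∑' n, ‖z‖ * ‖x‖ ^ n * ‖y‖ := by
        apply tsum_of_norm_bounded hgr.hasSum (fun n => norm_sand_pow_le x z y n)
    _ = ‖z‖ * (1 - ‖x‖)⁻¹ * ‖y‖ := by
        rw [Summable.tsum_mul_right ‖y‖ ((summable_geometric_of_lt_one (norm_nonneg x) hx).mul_left ‖z‖),
          Summable.tsum_mul_left _ (summable_geometric_of_lt_one (norm_nonneg x) hx),
          tsum_geometric_of_lt_one (norm_nonneg x) hx]

lemma smul_q2_bound (hq1 : ‖q‖ < 1) (W : A) (hW : ‖q‖ * ‖W‖ < 1) :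
    ‖q‖ * ‖(q ^ 2 : ℂ) • W‖ < 1 := by
  rw [norm_smul, norm_pow]
  have h1 : ‖q‖ ^ 2 ≤ 1 := pow_le_one₀ (norm_nonneg q) hq1.le
  nlinarith [norm_nonneg W, norm_nonneg q, mul_nonneg (norm_nonneg q) (norm_nonneg W)]

lemma psi_funct (hq1 : ‖q‖ < 1) (W : A) (hW : ‖q‖ * ‖W‖ < 1) :
    quantumPsiB q ((q ^ 2 : ℂ) • W) = (1 + q • W) * quantumPsiB q W := by
  have hf : Summable (fun n => aq q n • W ^ n) := summable_psi hq1 W hW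
  have hg : Summable (fun n => aq q n • ((q ^ 2 : ℂ) • W) ^ n) :=
    summable_psi hq1 _ (smul_q2_bound hq1 W hW)
  have hterm : ∀ n : ℕ, aq q n • ((q ^ 2 : ℂ) • W) ^ n = (aq q n * (q^2)^n) • W ^ n := by
    intro n; rw [smul_pow, smul_smul]
  have hg' : Summable (fun n => (aq q n * (q^2)^n) • W ^ n) := hg.congr hterm
  have hdiff : quantumPsiB q ((q ^ 2 : ℂ) • W) - quantumPsiB q W
      = ∑' n, ((aq q n * (q^2)^n - aq q n) • W ^ n) := by
    calc quantumPsiB q ((q ^ 2 : ℂ) • W) - quantumPsiB q W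
        = (∑' n, (aq q n * (q^2)^n) • W ^ n) - ∑' n, aq q n • W ^ n := by
          rw [psi_eq, psi_eq]; congr 1; exact tsum_congr hterm
      _ = ∑' n, ((aq q n * (q^2)^n) • W ^ n - aq q n • W ^ n) := (Summable.tsum_sub hg' hf).symm
      _ = ∑' n, ((aq q n * (q^2)^n - aq q n) • W ^ n) :=
          tsum_congr fun n => (sub_smul _ _ _).symm
  have hshift : (∑' n, ((aq q n * (q^2)^n - aq q n) • W ^ n) : A)
      = ∑' n, (q * aq q n) • W ^ (n+1) := by
    have hs : Summable (fun n => (aq q n * (q^2)^n - aq q n) • W ^ n) :=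
      (hg'.sub hf).congr (fun n => (sub_smul _ _ _).symm)
    rw [Summable.tsum_eq_zero_add hs]
    have h0 : (aq q 0 * (q^2)^0 - aq q 0) • (W:A)^0 = 0 := by simp
    rw [h0, zero_add]
    exact tsum_congr fun n => by rw [aq_succ_key hq1 n]
  have hrhs : (1 + q • W) * quantumPsiB q W = quantumPsiB q W + ∑' n, (q * aq q n) • W ^ (n+1) := by
    rw [add_mul, one_mul]
    congr 1
    rw [psi_eq, ← Summable.tsum_mul_left (q • W) hf]
    exact tsum_congr fun n => by
      calc (q • W) * (aq q n • W ^ n) = q • (aq q n • (W * W ^ n)) := by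
            rw [smul_mul_assoc, mul_smul_comm]
        _ = (q * aq q n) • W ^ (n+1) := by rw [smul_smul, ← pow_succ']
  rw [hrhs, ← hshift, ← hdiff]
  abel

lemma pow_comm_right {X Y : A} (hXY : Y * X = (q ^ 2 : ℂ) • (X * Y)) :
    ∀ n : ℕ, Y ^ n * X = ((q^2)^n : ℂ) • (X * Y ^ n)
  | 0 => by simp
  | (n+1) => by
    calc Y ^ (n+1) * X = Y ^ n * (Y * X) := by rw [pow_succ, mul_assoc]
      _ = Y ^ n * ((q ^ 2 : ℂ) • (X * Y)) := by rw [hXY]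
      _ = (q^2 : ℂ) • ((Y^n * X) * Y) := by rw [mul_smul_comm, ← mul_assoc]
      _ = (q^2 : ℂ) • ((((q^2)^n : ℂ) • (X * Y^n)) * Y) := by rw [pow_comm_right hXY n]
      _ = ((q^2)^(n+1) : ℂ) • (X * Y^(n+1)) := by
          rw [smul_mul_assoc, smul_smul, mul_assoc, ← pow_succ, ← pow_succ']

lemma pow_comm_left {X Y : A} (hXY : Y * X = (q ^ 2 : ℂ) • (X * Y)) :
    ∀ n : ℕ, Y * X ^ n = ((q^2)^n : ℂ) • (X ^ n * Y)
  | 0 => by simp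
  | (n+1) => by
    calc Y * X^(n+1) = (Y * X) * X^n := by rw [pow_succ', ← mul_assoc]
      _ = (q^2 : ℂ) • ((X * Y) * X^n) := by rw [hXY, smul_mul_assoc]
      _ = (q^2 : ℂ) • (X * (Y * X^n)) := by rw [mul_assoc]
      _ = (q^2 : ℂ) • (X * (((q^2)^n : ℂ) • (X^n * Y))) := by rw [pow_comm_left hXY n]
      _ = ((q^2)^(n+1) : ℂ) • (X^(n+1) * Y) := by
          rw [mul_smul_comm, smul_smul, ← mul_assoc, ← pow_succ', ← pow_succ']

lemma psi_rmove (hq1 : ‖q‖ < 1) {X Y : A} (hXY : Y * X = (q ^ 2 : ℂ) • (X * Y))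
    (hY : ‖q‖ * ‖Y‖ < 1) :
    quantumPsiB q Y * X = X * quantumPsiB q ((q ^ 2 : ℂ) • Y) := by
  have hf := summable_psi hq1 Y hY
  have hg := summable_psi hq1 _ (smul_q2_bound hq1 Y hY)
  rw [psi_eq, psi_eq, ← Summable.tsum_mul_right X hf, ← Summable.tsum_mul_left X hg]
  refine tsum_congr fun n => ?_
  rw [smul_mul_assoc, pow_comm_right hXY n, smul_pow, mul_smul_comm, mul_smul_comm,
    smul_smul]

lemma psi_lmove (hq1 : ‖q‖ < 1) {X Y : A} (hXY : Y * X = (q ^ 2 : ℂ) • (X * Y))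
    (hX : ‖q‖ * ‖X‖ < 1) :
    Y * quantumPsiB q X = quantumPsiB q ((q ^ 2 : ℂ) • X) * Y := by
  have hf := summable_psi hq1 X hX
  have hg := summable_psi hq1 _ (smul_q2_bound hq1 X hX)
  rw [psi_eq, psi_eq, ← Summable.tsum_mul_left Y hf, ← Summable.tsum_mul_right Y hg]
  refine tsum_congr fun n => ?_
  rw [mul_smul_comm, pow_comm_left hXY n, smul_pow, smul_mul_assoc, smul_mul_assoc,
    smul_smul]

lemma psi_self_comm (hq1 : ‖q‖ < 1) (W : A) (hW : ‖q‖ * ‖W‖ < 1) :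
    W * quantumPsiB q W = quantumPsiB q W * W := by
  have hf := summable_psi hq1 W hW
  rw [psi_eq, ← Summable.tsum_mul_left W hf, ← Summable.tsum_mul_right W hf]
  exact tsum_congr fun n => by
    rw [mul_smul_comm, smul_mul_assoc, ← pow_succ, ← pow_succ']

lemma psi_comm_one_add (hq1 : ‖q‖ < 1) (W : A) (hW : ‖q‖ * ‖W‖ < 1) :
    (1 + q • W) * quantumPsiB q W = quantumPsiB q W * (1 + q • W) := by
  rw [add_mul, mul_add, one_mul, mul_one, smul_mul_assoc, mul_smul_comm,
    psi_self_comm hq1 W hW]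

lemma psi_conj (hq1 : ‖q‖ < 1) (u : Aˣ) (W : A) (hW : ‖q‖ * ‖W‖ < 1) :
    quantumPsiB q (↑u * W * ↑u⁻¹) = ↑u * quantumPsiB q W * ↑u⁻¹ := by
  have hf := summable_psi hq1 W hW
  rw [psi_eq, psi_eq, ← Summable.tsum_mul_left (↑u : A) hf,
    ← Summable.tsum_mul_right (↑u⁻¹ : A) (hf.mul_left _)]
  exact tsum_congr fun n => by
    rw [Units.conj_pow, mul_smul_comm, smul_mul_assoc]

lemma exists_K (hq1 : ‖q‖ < 1) :
    ∃ K : ℝ, 0 ≤ K ∧ ∀ W : A, ‖W‖ ≤ 1 → ‖quantumPsiB q W - 1‖ ≤ K * ‖W‖ := by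
  obtain ⟨c, hc0, hc⟩ := norm_Pq_lb (q := q) hq1
  have hq1' : (0:ℝ) < 1 - ‖q‖ := by linarith
  refine ⟨c⁻¹ * (1 - ‖q‖)⁻¹ * ‖q‖, by positivity, fun W hW1 => ?_⟩
  have hr : ‖q‖ * ‖W‖ < 1 := by nlinarith [norm_nonneg q, norm_nonneg W]
  have hr0 : (0:ℝ) ≤ ‖q‖ * ‖W‖ := by positivity
  have hf := summable_psi hq1 W hr
  have hnorm : Summable (fun n => ‖aq q (n+1) • W ^ (n+1)‖) := by
    apply Summable.of_nonneg_of_le (fun n => norm_nonneg _) (fun n => term_norm_le hq1 hc0 hc W n)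
    have : Summable (fun n : ℕ => c⁻¹ * ((‖q‖ * ‖W‖) * (‖q‖ * ‖W‖) ^ n)) :=
      ((summable_geometric_of_lt_one hr0 hr).mul_left _).mul_left _
    exact this.congr fun n => by rw [← pow_succ']
  have h0 : quantumPsiB q W - 1 = ∑' n, aq q (n+1) • W ^ (n+1) := by
    rw [psi_eq, Summable.tsum_eq_zero_add hf]
    have : aq q 0 • (W:A) ^ 0 = 1 := by simp [aq_zero]
    rw [this, add_sub_cancel_left]
  rw [h0]
  calc ‖∑' n, aq q (n+1) • W ^ (n+1)‖ ≤ ∑' n, ‖aq q (n+1) • W ^ (n+1)‖ :=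
        norm_tsum_le_tsum_norm hnorm
    _ ≤ ∑' n, c⁻¹ * (‖q‖ * ‖W‖) ^ (n+1) := by
        apply Summable.tsum_le_tsum (fun n => term_norm_le hq1 hc0 hc W n) hnorm
        have : Summable (fun n : ℕ => c⁻¹ * ((‖q‖ * ‖W‖) * (‖q‖ * ‖W‖) ^ n)) :=
          ((summable_geometric_of_lt_one hr0 hr).mul_left _).mul_left _
        exact this.congr fun n => by rw [← pow_succ']
    _ = c⁻¹ * ((‖q‖ * ‖W‖) * (1 - ‖q‖ * ‖W‖)⁻¹) := by
        simp_rw [pow_succ']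
        rw [tsum_mul_left, tsum_mul_left, tsum_geometric_of_lt_one hr0 hr]
    _ ≤ c⁻¹ * ((‖q‖ * ‖W‖) * (1 - ‖q‖)⁻¹) := by
        apply mul_le_mul_of_nonneg_left _ (by positivity)
        apply mul_le_mul_of_nonneg_left _ hr0
        apply inv_anti₀ hq1'
        nlinarith [norm_nonneg q, norm_nonneg W]
    _ = c⁻¹ * (1 - ‖q‖)⁻¹ * ‖q‖ * ‖W‖ := by ring

lemma isUnit_one_add_smul {z : ℂ} {W : A} (h : ‖z‖ * ‖W‖ < 1) : IsUnit (1 + z • W) := by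
  rw [← sub_neg_eq_add]
  apply isUnit_one_sub_of_norm_lt_one
  rw [norm_neg, norm_smul]
  exact h

lemma psi_isUnit (hq0 : 0 < ‖q‖) (hq1 : ‖q‖ < 1) (W : A) (hW : ‖W‖ < 1) :
    IsUnit (quantumPsiB q W) := by
  obtain ⟨K, hK0, hK⟩ := exists_K (q := q) (A := A) hq1
  -- find N with smallness
  obtain ⟨N, hN⟩ : ∃ N : ℕ, (‖q‖ ^ 2) ^ N < (K + 1)⁻¹ :=
    exists_pow_lt_of_lt_one (by positivity) (pow_lt_one₀ (norm_nonneg q) hq1 two_ne_zero)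
  have hsm : ∀ m : ℕ, ‖((q^2)^m : ℂ) • W‖ ≤ ‖W‖ := by
    intro m
    rw [norm_smul, norm_pow, norm_pow]
    have h1 : (‖q‖ ^ 2) ^ m ≤ 1 := pow_le_one₀ (by positivity) (pow_le_one₀ (norm_nonneg q) hq1.le)
    nlinarith [norm_nonneg W]
  -- unit at level N
  have hUnitN : IsUnit (quantumPsiB q (((q^2)^N : ℂ) • W)) := by
    have hb : ‖quantumPsiB q (((q^2)^N : ℂ) • W) - 1‖ < 1 := by
      have h1 := hK (((q^2)^N : ℂ) • W) ((hsm N).trans hW.le)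
      have h2 : ‖((q^2)^N : ℂ) • W‖ ≤ (‖q‖^2)^N := by
        rw [norm_smul, norm_pow, norm_pow]
        have hle1 : (‖q‖^2)^N ≤ 1 :=
          pow_le_one₀ (sq_nonneg ‖q‖) (pow_le_one₀ (norm_nonneg q) hq1.le)
        nlinarith [pow_nonneg (sq_nonneg ‖q‖) N, hW.le, norm_nonneg W]
      calc ‖quantumPsiB q (((q^2)^N : ℂ) • W) - 1‖ ≤ K * ‖((q^2)^N : ℂ) • W‖ := h1
        _ ≤ K * (‖q‖^2)^N := mul_le_mul_of_nonneg_left h2 hK0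
        _ ≤ K * (K+1)⁻¹ := mul_le_mul_of_nonneg_left hN.le hK0
        _ < 1 := by
            rw [mul_inv_lt_iff₀ (by positivity)]
            linarith
    have := isUnit_one_sub_of_norm_lt_one (x := 1 - quantumPsiB q (((q^2)^N : ℂ) • W))
      (by rw [norm_sub_rev] at hb; exact hb)
    simpa using this
  -- descend
  have hstep : ∀ m : ℕ, IsUnit (quantumPsiB q (((q^2)^m : ℂ) • W)) →
      IsUnit (quantumPsiB q W) := by
    intro m
    induction m with
    | zero => intro h; simpa using h
    | succ m ih =>
      intro h
      apply ih
      have heq : (((q^2)^(m+1) : ℂ) • W) = (q^2 : ℂ) • (((q^2)^m : ℂ) • W) := by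
        rw [smul_smul, ← pow_succ']
      have hsum : ‖q‖ * ‖((q^2)^m : ℂ) • W‖ < 1 := by
        nlinarith [hsm m, norm_nonneg (((q^2)^m : ℂ) • W), norm_nonneg q, norm_nonneg W]
      rw [heq, psi_funct hq1 _ hsum] at h
      have hu : IsUnit (1 + q • (((q^2)^m : ℂ) • W)) := isUnit_one_add_smul hsum
      have : quantumPsiB q (((q^2)^m : ℂ) • W)
          = Ring.inverse (1 + q • (((q^2)^m : ℂ) • W)) * ((1 + q • (((q^2)^m : ℂ) • W)) * quantumPsiB q (((q^2)^m : ℂ) • W)) := by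
        rw [Ring.inverse_mul_cancel_left _ _ hu]
      rw [this]
      exact (IsUnit.ringInverse hu).mul h
  exact hstep N hUnitN

lemma expand_one_add (U z : A) : (1 + q • U) * z = z + q • (U * z) := by
  rw [add_mul, one_mul, smul_mul_assoc]

lemma psi_merge_step (hq1 : ‖q‖ < 1) {U V : A} (hrel : V * U = (q ^ 2 : ℂ) • (U * V))
    (hU : ‖q‖ * ‖U‖ < 1) (hV : ‖q‖ * ‖V‖ < 1) :
    quantumPsiB q ((q ^ 2 : ℂ) • U) * quantumPsiB q ((q ^ 2 : ℂ) • V)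
      = (1 + q • (U + V)) * (quantumPsiB q U * quantumPsiB q V) := by
  have hmove : V * quantumPsiB q U = (1 + q • U) * (quantumPsiB q U * V) := by
    rw [psi_lmove hq1 hrel hU, psi_funct hq1 U hU, mul_assoc]
  have hmove' : ∀ R : A, (1 + q • U) * (quantumPsiB q U * (V * R))
      = V * (quantumPsiB q U * R) := by
    intro R
    calc (1 + q • U) * (quantumPsiB q U * (V * R))
        = ((1 + q • U) * (quantumPsiB q U * V)) * R := by rw [mul_assoc, mul_assoc]
      _ = (V * quantumPsiB q U) * R := by rw [← hmove]
      _ = V * (quantumPsiB q U * R) := by rw [mul_assoc]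
  rw [psi_funct hq1 U hU, psi_funct hq1 V hV]
  calc ((1 + q • U) * quantumPsiB q U) * ((1 + q • V) * quantumPsiB q V)
      = (1 + q • U) * (quantumPsiB q U * ((1 + q • V) * quantumPsiB q V)) := by
        rw [mul_assoc]
    _ = (1 + q • U) * (quantumPsiB q U * quantumPsiB q V
          + q • (quantumPsiB q U * (V * quantumPsiB q V))) := by
        rw [expand_one_add V (quantumPsiB q V), mul_add, mul_smul_comm]
    _ = (1 + q • U) * (quantumPsiB q U * quantumPsiB q V)
          + q • ((1 + q • U) * (quantumPsiB q U * (V * quantumPsiB q V))) := by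
        rw [mul_add, mul_smul_comm]
    _ = (quantumPsiB q U * quantumPsiB q V)
          + q • (U * (quantumPsiB q U * quantumPsiB q V))
          + q • (V * (quantumPsiB q U * quantumPsiB q V)) := by
        rw [hmove' (quantumPsiB q V), expand_one_add U (quantumPsiB q U * quantumPsiB q V)]
    _ = (1 + q • (U + V)) * (quantumPsiB q U * quantumPsiB q V) := by
        rw [expand_one_add (U + V) (quantumPsiB q U * quantumPsiB q V), add_mul, smul_add,
          add_assoc]

lemma norm_qpow_smul (m : ℕ) (W : A) : ‖((q^2)^m : ℂ) • W‖ = (‖q‖^2)^m * ‖W‖ := by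
  rw [norm_smul, norm_pow, norm_pow]

set_option maxHeartbeats 1000000 in
lemma psi_merge (hq1 : ‖q‖ < 1) {U V : A}
    (hrel : V * U = (q ^ 2 : ℂ) • (U * V)) (hU : ‖U‖ < 1) (hV : ‖V‖ < 1)
    (hUV : ‖U‖ + ‖V‖ < 1) :
    quantumPsiB q U * quantumPsiB q V = quantumPsiB q (U + V) := by
  have hs0 : (0:ℝ) ≤ ‖q‖^2 := sq_nonneg _
  have hs1 : ‖q‖^2 < 1 := pow_lt_one₀ (norm_nonneg q) hq1 two_ne_zero
  have hsm1 : ∀ m : ℕ, (‖q‖^2)^m ≤ 1 := fun m => pow_le_one₀ hs0 hs1.le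
  have hUV0 : ‖U + V‖ < 1 := lt_of_le_of_lt (norm_add_le U V) hUV
  have hT0 : (0:ℝ) ≤ ‖q‖ * ‖U + V‖ := by positivity
  have hT1 : ‖q‖ * ‖U + V‖ < 1 := by nlinarith [norm_nonneg q, norm_nonneg (U + V)]
  set T := ‖q‖ * ‖U + V‖ with hT_def
  set D : ℕ → A := fun m => quantumPsiB q (((q^2)^m : ℂ) • U) * quantumPsiB q (((q^2)^m : ℂ) • V)
      - quantumPsiB q (((q^2)^m : ℂ) • (U + V)) with hD_def
  have hnUm : ∀ m, ‖((q^2)^m : ℂ) • U‖ ≤ ‖U‖ := by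
    intro m; rw [norm_qpow_smul]
    nlinarith [norm_nonneg U, hsm1 m, pow_nonneg hs0 m]
  have hnVm : ∀ m, ‖((q^2)^m : ℂ) • V‖ ≤ ‖V‖ := by
    intro m; rw [norm_qpow_smul]
    nlinarith [norm_nonneg V, hsm1 m, pow_nonneg hs0 m]
  have hnSm : ∀ m, ‖((q^2)^m : ℂ) • (U + V)‖ ≤ ‖U + V‖ := by
    intro m; rw [norm_qpow_smul]
    nlinarith [norm_nonneg (U + V), hsm1 m, pow_nonneg hs0 m]
  have hqUm : ∀ m, ‖q‖ * ‖((q^2)^m : ℂ) • U‖ < 1 := by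
    intro m
    nlinarith [hnUm m, norm_nonneg (((q^2)^m : ℂ) • U), norm_nonneg q, norm_nonneg U]
  have hqVm : ∀ m, ‖q‖ * ‖((q^2)^m : ℂ) • V‖ < 1 := by
    intro m
    nlinarith [hnVm m, norm_nonneg (((q^2)^m : ℂ) • V), norm_nonneg q, norm_nonneg V]
  have hqSm : ∀ m, ‖q‖ * ‖((q^2)^m : ℂ) • (U + V)‖ < 1 := by
    intro m
    nlinarith [hnSm m, norm_nonneg (((q^2)^m : ℂ) • (U + V)), norm_nonneg q, norm_nonneg (U+V)]
  have hrelm : ∀ m : ℕ, (((q^2)^m : ℂ) • V) * (((q^2)^m : ℂ) • U)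
      = (q ^ 2 : ℂ) • ((((q^2)^m : ℂ) • U) * (((q^2)^m : ℂ) • V)) := by
    intro m
    rw [smul_mul_assoc, mul_smul_comm, smul_smul, hrel, smul_smul,
      smul_mul_assoc, mul_smul_comm, smul_smul, smul_smul]
    congr 1
    ring
  have hTm : ∀ m : ℕ, ‖q • (((q^2)^m : ℂ) • (U + V))‖ = T * (‖q‖^2)^m := by
    intro m
    rw [norm_smul, norm_qpow_smul, hT_def]
    ring
  have hTmlt : ∀ m : ℕ, T * (‖q‖^2)^m < 1 := by
    intro m
    nlinarith [hsm1 m, pow_nonneg hs0 m]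
  have hrec : ∀ m : ℕ, D (m+1) = (1 + q • (((q^2)^m : ℂ) • (U + V))) * D m := by
    intro m
    have e1 : (((q^2)^(m+1) : ℂ) • U) = (q^2 : ℂ) • (((q^2)^m : ℂ) • U) := by
      rw [smul_smul, ← pow_succ']
    have e2 : (((q^2)^(m+1) : ℂ) • V) = (q^2 : ℂ) • (((q^2)^m : ℂ) • V) := by
      rw [smul_smul, ← pow_succ']
    have e3 : (((q^2)^(m+1) : ℂ) • (U + V)) = (q^2 : ℂ) • (((q^2)^m : ℂ) • (U + V)) := by
      rw [smul_smul, ← pow_succ']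
    have e4 : (((q^2)^m : ℂ) • U) + (((q^2)^m : ℂ) • V) = ((q^2)^m : ℂ) • (U + V) :=
      (smul_add _ _ _).symm
    simp only [hD_def]
    rw [e1, e2, e3, psi_merge_step hq1 (hrelm m) (hqUm m) (hqVm m),
      psi_funct hq1 _ (hqSm m), e4, ← mul_sub]
  have hDbound : ∀ m : ℕ, ‖D 0‖ ≤ (∏ k ∈ range m, (1 - T * (‖q‖^2)^k))⁻¹ * ‖D m‖ := by
    intro m
    induction m with
    | zero => simp
    | succ m ih =>
      have hprodpos : (0:ℝ) < ∏ k ∈ range m, (1 - T * (‖q‖^2)^k) :=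
        Finset.prod_pos fun k _ => by nlinarith [hTmlt k, pow_nonneg hs0 k]
      have hstep : ‖D m‖ ≤ (1 - T * (‖q‖^2)^m)⁻¹ * ‖D (m+1)‖ := by
        have hun : IsUnit (1 + q • (((q^2)^m : ℂ) • (U + V))) :=
          isUnit_one_add_smul (hqSm m)
        have hDm : D m = Ring.inverse (1 - (-(q • (((q^2)^m : ℂ) • (U + V))))) * D (m+1) := by
          rw [sub_neg_eq_add, hrec m, Ring.inverse_mul_cancel_left _ _ hun]
        rw [hDm]
        have hnn : ‖-(q • (((q^2)^m : ℂ) • (U + V)))‖ < 1 := by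
          rw [norm_neg, hTm m]; exact hTmlt m
        have := inv_mul_norm_le (-(q • (((q^2)^m : ℂ) • (U + V)))) (D (m+1)) hnn
        rwa [norm_neg, hTm m] at this
      calc ‖D 0‖ ≤ (∏ k ∈ range m, (1 - T * (‖q‖^2)^k))⁻¹ * ‖D m‖ := ih
        _ ≤ (∏ k ∈ range m, (1 - T * (‖q‖^2)^k))⁻¹ * ((1 - T * (‖q‖^2)^m)⁻¹ * ‖D (m+1)‖) := by
            exact mul_le_mul_of_nonneg_left hstep (inv_nonneg.mpr hprodpos.le)
        _ = (∏ k ∈ range (m+1), (1 - T * (‖q‖^2)^k))⁻¹ * ‖D (m+1)‖ := by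
            rw [Finset.prod_range_succ, mul_inv]
            ring
  obtain ⟨c₂, hc₂0, hc₂⟩ := exists_lb hT0 hT1 hs0 hs1
  obtain ⟨K, hK0, hK⟩ := exists_K (q := q) (A := A) hq1
  set C : ℝ := K * (K + ‖(1:A)‖) + K + K with hC_def
  have hC0 : 0 ≤ C := by
    have := norm_nonneg (1 : A)
    nlinarith
  have hDm_bound : ∀ m : ℕ, ‖D m‖ ≤ C * (‖q‖^2)^m := by
    intro m
    have hUm1 : ‖((q^2)^m : ℂ) • U‖ ≤ 1 := (hnUm m).trans hU.le
    have hVm1 : ‖((q^2)^m : ℂ) • V‖ ≤ 1 := (hnVm m).trans hV.le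
    have hSm1 : ‖((q^2)^m : ℂ) • (U + V)‖ ≤ 1 := (hnSm m).trans hUV0.le
    have hKU := hK _ hUm1
    have hKV := hK _ hVm1
    have hKS := hK _ hSm1
    have hpsiV : ‖quantumPsiB q (((q^2)^m : ℂ) • V)‖ ≤ K + ‖(1:A)‖ := by
      calc ‖quantumPsiB q (((q^2)^m : ℂ) • V)‖
          = ‖(quantumPsiB q (((q^2)^m : ℂ) • V) - 1) + 1‖ := by rw [sub_add_cancel]
        _ ≤ ‖quantumPsiB q (((q^2)^m : ℂ) • V) - 1‖ + ‖(1:A)‖ := norm_add_le _ _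
        _ ≤ K + ‖(1:A)‖ := by
            have h2 : K * ‖((q^2)^m : ℂ) • V‖ ≤ K := by nlinarith [norm_nonneg (((q^2)^m : ℂ) • V)]
            linarith [hKV]
    have hsplit : D m = (quantumPsiB q (((q^2)^m : ℂ) • U) - 1) * quantumPsiB q (((q^2)^m : ℂ) • V)
        + (quantumPsiB q (((q^2)^m : ℂ) • V) - 1)
        - (quantumPsiB q (((q^2)^m : ℂ) • (U + V)) - 1) := by
      simp only [hD_def]
      rw [sub_mul, one_mul]
      abel
    have hnormUm : ‖((q^2)^m : ℂ) • U‖ ≤ (‖q‖^2)^m := by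
      rw [norm_qpow_smul]
      nlinarith [pow_nonneg hs0 m, norm_nonneg U]
    have hnormVm : ‖((q^2)^m : ℂ) • V‖ ≤ (‖q‖^2)^m := by
      rw [norm_qpow_smul]
      nlinarith [pow_nonneg hs0 m, norm_nonneg V]
    have hnormSm : ‖((q^2)^m : ℂ) • (U + V)‖ ≤ (‖q‖^2)^m := by
      rw [norm_qpow_smul]
      nlinarith [pow_nonneg hs0 m, norm_nonneg (U + V)]
    have hEU : ‖quantumPsiB q (((q^2)^m : ℂ) • U) - 1‖ ≤ K * (‖q‖^2)^m :=
      hKU.trans (mul_le_mul_of_nonneg_left hnormUm hK0)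
    have hEV : ‖quantumPsiB q (((q^2)^m : ℂ) • V) - 1‖ ≤ K * (‖q‖^2)^m :=
      hKV.trans (mul_le_mul_of_nonneg_left hnormVm hK0)
    have hES : ‖quantumPsiB q (((q^2)^m : ℂ) • (U + V)) - 1‖ ≤ K * (‖q‖^2)^m :=
      hKS.trans (mul_le_mul_of_nonneg_left hnormSm hK0)
    calc ‖D m‖ ≤ ‖(quantumPsiB q (((q^2)^m : ℂ) • U) - 1) * quantumPsiB q (((q^2)^m : ℂ) • V)
          + (quantumPsiB q (((q^2)^m : ℂ) • V) - 1)‖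
          + ‖quantumPsiB q (((q^2)^m : ℂ) • (U + V)) - 1‖ := by
          rw [hsplit]; exact norm_sub_le _ _
      _ ≤ (‖(quantumPsiB q (((q^2)^m : ℂ) • U) - 1) * quantumPsiB q (((q^2)^m : ℂ) • V)‖
          + ‖quantumPsiB q (((q^2)^m : ℂ) • V) - 1‖)
          + ‖quantumPsiB q (((q^2)^m : ℂ) • (U + V)) - 1‖ :=
          add_le_add_left (norm_add_le _ _) _
      _ ≤ (‖quantumPsiB q (((q^2)^m : ℂ) • U) - 1‖ * (K + ‖(1:A)‖)
          + ‖quantumPsiB q (((q^2)^m : ℂ) • V) - 1‖)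
          + ‖quantumPsiB q (((q^2)^m : ℂ) • (U + V)) - 1‖ := by
          apply add_le_add_left (add_le_add_left _ _) _
          exact (norm_mul_le _ _).trans (mul_le_mul_of_nonneg_left hpsiV (norm_nonneg _))
      _ ≤ ((K * (‖q‖^2)^m) * (K + ‖(1:A)‖) + K * (‖q‖^2)^m) + K * (‖q‖^2)^m := by
          apply add_le_add (add_le_add _ hEV) hES
          apply mul_le_mul_of_nonneg_right hEU
          positivity
      _ = C * (‖q‖^2)^m := by rw [hC_def]; ring
  have hfin : ∀ m : ℕ, ‖D 0‖ ≤ (c₂⁻¹ * C) * (‖q‖^2)^m := by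
    intro m
    calc ‖D 0‖ ≤ (∏ k ∈ range m, (1 - T * (‖q‖^2)^k))⁻¹ * ‖D m‖ := hDbound m
      _ ≤ c₂⁻¹ * (C * (‖q‖^2)^m) := by
          apply mul_le_mul
          · exact inv_anti₀ hc₂0 (hc₂ m)
          · exact hDm_bound m
          · exact norm_nonneg _
          · positivity
      _ = (c₂⁻¹ * C) * (‖q‖^2)^m := by ring
  have hlim : Filter.Tendsto (fun m : ℕ => (c₂⁻¹ * C) * (‖q‖^2)^m) Filter.atTop (nhds 0) := by
    have := (tendsto_pow_atTop_nhds_zero_of_lt_one hs0 hs1).const_mul (c₂⁻¹ * C)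
    simpa using this
  have hD0 : ‖D 0‖ ≤ 0 := ge_of_tendsto' hlim hfin
  have hD00 : D 0 = 0 := norm_le_zero_iff.mp hD0
  have hfin0 : quantumPsiB q U * quantumPsiB q V - quantumPsiB q (U + V) = 0 := by
    simp only [hD_def] at hD00
    simpa using hD00
  exact sub_eq_zero.mp hfin0

lemma isUnit_one_add (x : A) (h : ‖x‖ < 1) : IsUnit (1 + x) := by
  rw [← sub_neg_eq_add]
  exact isUnit_one_sub_of_norm_lt_one (by rwa [norm_neg])

lemma inv_swap {a b u w : A} (hu : IsUnit u) (hw : IsUnit w) (h : u * a = b * w) :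
    Ring.inverse u * b = a * Ring.inverse w := by
  calc Ring.inverse u * b = Ring.inverse u * (b * (w * Ring.inverse w)) := by
        rw [Ring.mul_inverse_cancel w hw, mul_one]
    _ = Ring.inverse u * ((b * w) * Ring.inverse w) := by rw [mul_assoc]
    _ = Ring.inverse u * ((u * a) * Ring.inverse w) := by rw [← h]
    _ = (Ring.inverse u * (u * a)) * Ring.inverse w := by rw [← mul_assoc]
    _ = a * Ring.inverse w := by rw [Ring.inverse_mul_cancel_left _ _ hu]

lemma inv_rev {a b : A} (ha : IsUnit a) (hb : IsUnit b) :
    Ring.inverse (a * b) = Ring.inverse b * Ring.inverse a := by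
  rcases ha with ⟨ua, rfl⟩
  rcases hb with ⟨ub, rfl⟩
  rw [← Units.val_mul, Ring.inverse_unit, Ring.inverse_unit, Ring.inverse_unit, mul_inv_rev,
    Units.val_mul]

end banach

end VolkovAux


open VolkovAux in
set_option maxHeartbeats 2000000 in
/-- Volkov's pentagon identity (quantum dilogarithm identity in universal form for
type `A₂`): if `YX = q² XY` with `‖X‖, ‖Y‖ < 1/4`, then
`Ψ_q(X(1+qY)⁻¹)⁻¹ Ψ_q(qX(1+qX+qY)⁻¹Y)⁻¹ Ψ_q((1+qX)⁻¹Y)⁻¹ Ψ_q(X) Ψ_q(Y) = 1`. -/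
theorem volkov_pentagon {A : Type*} [NormedRing A] [NormedAlgebra ℂ A]
    [CompleteSpace A] (q : ℂ) (hq0 : 0 < ‖q‖) (hq1 : ‖q‖ < 1) (X Y : A)
    (hXY : Y * X = q ^ 2 • (X * Y)) (hX : ‖X‖ < 1 / 4) (hY : ‖Y‖ < 1 / 4) :
    IsUnit (1 + q • Y) ∧ IsUnit (1 + q • X) ∧ IsUnit (1 + q • X + q • Y) ∧
    ‖X * Ring.inverse (1 + q • Y)‖ < 1 ∧
    ‖q • (X * Ring.inverse (1 + q • X + q • Y) * Y)‖ < 1 ∧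
    ‖Ring.inverse (1 + q • X) * Y‖ < 1 ∧ ‖X‖ < 1 ∧ ‖Y‖ < 1 ∧
    IsUnit (quantumPsiB q (X * Ring.inverse (1 + q • Y))) ∧
    IsUnit (quantumPsiB q (q • (X * Ring.inverse (1 + q • X + q • Y) * Y))) ∧
    IsUnit (quantumPsiB q (Ring.inverse (1 + q • X) * Y)) ∧
    Ring.inverse (quantumPsiB q (X * Ring.inverse (1 + q • Y))) *
      Ring.inverse (quantumPsiB q (q • (X * Ring.inverse (1 + q • X + q • Y) * Y))) *
      Ring.inverse (quantumPsiB q (Ring.inverse (1 + q • X) * Y)) *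
      quantumPsiB q X * quantumPsiB q Y = 1 := by
  have hnX1 : ‖X‖ < 1 := by linarith
  have hnY1 : ‖Y‖ < 1 := by linarith
  have hq3 : ‖q‖ ^ 3 ≤ 1 := pow_le_one₀ (norm_nonneg q) hq1.le
  have hqY14 : ‖q • Y‖ < 1/4 := by
    rw [norm_smul]; nlinarith [norm_nonneg q, norm_nonneg Y]
  have hqX14 : ‖q • X‖ < 1/4 := by
    rw [norm_smul]; nlinarith [norm_nonneg q, norm_nonneg X]
  have hq3Y : ‖(q^3 : ℂ) • Y‖ < 1/4 := by
    rw [norm_smul, norm_pow]; nlinarith [norm_nonneg q, norm_nonneg Y, pow_nonneg (norm_nonneg q) 3]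
  have hxy : ‖q • X + q • Y‖ < 1/2 := (norm_add_le _ _).trans_lt (by linarith)
  have hxy3 : ‖q • X + (q^3 : ℂ) • Y‖ < 1/2 := (norm_add_le _ _).trans_lt (by linarith)
  -- units
  have hvU : IsUnit (1 + q • Y) := isUnit_one_add _ (by linarith)
  have huU : IsUnit (1 + q • X) := isUnit_one_add _ (by linarith)
  have hwU : IsUnit (1 + q • X + q • Y) := by
    rw [add_assoc]; exact isUnit_one_add _ (by linarith)
  have htU : IsUnit (1 + (q^3 : ℂ) • Y) := isUnit_one_add _ (by linarith)
  have hw'U : IsUnit (1 + q • X + (q^3 : ℂ) • Y) := by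
    rw [add_assoc]; exact isUnit_one_add _ (by linarith)
  -- commutation identities
  have hYX3 : q • (Y * X) = (q^3 : ℂ) • (X * Y) := by
    rw [hXY, smul_smul]; congr 1; ring
  have hcomm_v : (1 + q • Y) * X = X * (1 + (q^3 : ℂ) • Y) := by
    rw [add_mul, one_mul, mul_add, mul_one, smul_mul_assoc, hYX3, mul_smul_comm]
  have hcomm_w : (1 + q • X + q • Y) * X = X * (1 + q • X + (q^3 : ℂ) • Y) := by
    rw [add_mul, add_mul, one_mul, mul_add, mul_add, mul_one, smul_mul_assoc, smul_mul_assoc,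
      hYX3, mul_smul_comm, mul_smul_comm]
  have hkey : (1 + q • Y) * (1 + q • X + (q^3 : ℂ) • Y)
      = (1 + q • X + q • Y) * (1 + (q^3 : ℂ) • Y) := by
    simp only [mul_add, add_mul, one_mul, mul_one, smul_mul_assoc, mul_smul_comm, smul_smul,
      hXY]
    module
  have hcomm_vY : (1 + q • Y) * Y = Y * (1 + q • Y) := by
    rw [add_mul, one_mul, mul_add, mul_one, smul_mul_assoc, mul_smul_comm]
  -- inverse swaps
  have hswap_v : Ring.inverse (1 + q • Y) * X = X * Ring.inverse (1 + (q^3 : ℂ) • Y) :=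
    inv_swap hvU htU hcomm_v
  have hswap_w : Ring.inverse (1 + q • X + q • Y) * X
      = X * Ring.inverse (1 + q • X + (q^3 : ℂ) • Y) := inv_swap hwU hw'U hcomm_w
  have hYv : Ring.inverse (1 + q • Y) * Y = Y * Ring.inverse (1 + q • Y) :=
    inv_swap hvU hvU hcomm_vY
  have hinv1 : Ring.inverse (1 + (q^3 : ℂ) • Y) * Ring.inverse (1 + q • X + q • Y)
      = Ring.inverse (1 + q • X + (q^3 : ℂ) • Y) * Ring.inverse (1 + q • Y) := by
    rw [← inv_rev hwU htU, ← inv_rev hvU hw'U, hkey]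
  -- abbreviations
  set Aa : A := X * Ring.inverse (1 + q • Y) with hAa_def
  set Bb : A := q • (X * Ring.inverse (1 + q • X + q • Y) * Y) with hBb_def
  set Cc : A := Ring.inverse (1 + q • X) * Y with hCc_def
  -- norm bounds
  have hsubv : (1 : A) + q • Y = 1 - (-(q • Y)) := by rw [sub_neg_eq_add]
  have hsubu : (1 : A) + q • X = 1 - (-(q • X)) := by rw [sub_neg_eq_add]
  have hsubw : (1 : A) + q • X + q • Y = 1 - (-(q • X + q • Y)) := by
    rw [sub_neg_eq_add, add_assoc]
  have hnormAa : ‖Aa‖ < 1/3 := by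
    have h1 := mul_inv_norm_le (-(q • Y)) X (by rw [norm_neg]; linarith)
    rw [norm_neg] at h1
    rw [hAa_def, hsubv]
    have h2 : (1 - ‖q • Y‖)⁻¹ ≤ (3/4 : ℝ)⁻¹ :=
      inv_anti₀ (by norm_num) (by linarith)
    calc ‖X * Ring.inverse (1 - (-(q • Y)))‖ ≤ ‖X‖ * (1 - ‖q • Y‖)⁻¹ := h1
      _ ≤ ‖X‖ * (3/4 : ℝ)⁻¹ := mul_le_mul_of_nonneg_left h2 (norm_nonneg X)
      _ < 1/3 := by rw [show ((3:ℝ)/4)⁻¹ = 4/3 by norm_num]; nlinarith [norm_nonneg X]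
  have hnormCc : ‖Cc‖ < 1/3 := by
    have h1 := inv_mul_norm_le (-(q • X)) Y (by rw [norm_neg]; linarith)
    rw [norm_neg] at h1
    rw [hCc_def, hsubu]
    have h2 : (1 - ‖q • X‖)⁻¹ ≤ (3/4 : ℝ)⁻¹ :=
      inv_anti₀ (by norm_num) (by linarith)
    calc ‖Ring.inverse (1 - (-(q • X))) * Y‖ ≤ (1 - ‖q • X‖)⁻¹ * ‖Y‖ := h1
      _ ≤ (3/4 : ℝ)⁻¹ * ‖Y‖ := mul_le_mul_of_nonneg_right h2 (norm_nonneg Y)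
      _ < 1/3 := by rw [show ((3:ℝ)/4)⁻¹ = 4/3 by norm_num]; nlinarith [norm_nonneg Y]
  have hnormBb : ‖Bb‖ < 1/8 := by
    have h1 := sand_inv_norm_le (-(q • X + q • Y)) X Y (by rw [norm_neg]; linarith)
    rw [norm_neg] at h1
    rw [hBb_def, hsubw, norm_smul]
    have h2 : (1 - ‖q • X + q • Y‖)⁻¹ ≤ (2 : ℝ) := by
      rw [show (2:ℝ) = (1/2 : ℝ)⁻¹ by norm_num]
      exact inv_anti₀ (by norm_num) (by linarith)
    have h3 : ‖X * Ring.inverse (1 - (-(q • X + q • Y))) * Y‖ ≤ ‖X‖ * 2 * ‖Y‖ := by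
      refine h1.trans ?_
      have : ‖X‖ * (1 - ‖q • X + q • Y‖)⁻¹ ≤ ‖X‖ * 2 :=
        mul_le_mul_of_nonneg_left h2 (norm_nonneg X)
      exact mul_le_mul_of_nonneg_right this (norm_nonneg Y)
    calc ‖q‖ * ‖X * Ring.inverse (1 - (-(q • X + q • Y))) * Y‖
        ≤ 1 * (‖X‖ * 2 * ‖Y‖) := by
          apply mul_le_mul hq1.le h3 (norm_nonneg _) (by norm_num)
      _ < 1/8 := by nlinarith [norm_nonneg X, norm_nonneg Y]
  -- q-norm products
  have hqAa : ‖q‖ * ‖Aa‖ < 1 := by nlinarith [norm_nonneg Aa, norm_nonneg q]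
  have hqX1 : ‖q‖ * ‖X‖ < 1 := by nlinarith [norm_nonneg X, norm_nonneg q]
  have hqY1 : ‖q‖ * ‖Y‖ < 1 := by nlinarith [norm_nonneg Y, norm_nonneg q]
  have hqBb : ‖q‖ * ‖Bb‖ < 1 := by nlinarith [norm_nonneg Bb, norm_nonneg q]
  -- relation Y-Aa
  have hYAa : Y * Aa = (q^2 : ℂ) • (Aa * Y) := by
    rw [hAa_def, ← mul_assoc, hXY, smul_mul_assoc, mul_assoc, ← hYv, ← mul_assoc]
  -- products with X
  have hAaX : Aa * X = X * X * Ring.inverse (1 + (q^3 : ℂ) • Y) := by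
    rw [hAa_def, mul_assoc, hswap_v, ← mul_assoc]
  have hXwX : (X * Ring.inverse (1 + q • X + q • Y)) * X
      = X * X * Ring.inverse (1 + q • X + (q^3 : ℂ) • Y) := by
    rw [mul_assoc, hswap_w, ← mul_assoc]
  -- B' := (1 + q•Aa) * Bb equals q • (Aa * Y)
  have hw'split : (1 : A) + q • X + (q^3 : ℂ) • Y = (1 + (q^3 : ℂ) • Y) + q • X := by
    abel
  have hstep_a2 : (1 + q • Aa) * X
      = X * ((1 + q • X + (q^3 : ℂ) • Y) * Ring.inverse (1 + (q^3 : ℂ) • Y)) := by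
    calc (1 + q • Aa) * X = X + q • (X * X * Ring.inverse (1 + (q^3 : ℂ) • Y)) := by
          rw [add_mul, one_mul, smul_mul_assoc, hAaX]
      _ = X * ((1 + q • X + (q^3 : ℂ) • Y) * Ring.inverse (1 + (q^3 : ℂ) • Y)) := by
          rw [hw'split, add_mul, smul_mul_assoc, Ring.mul_inverse_cancel _ htU, mul_add,
            mul_one, mul_smul_comm, ← mul_assoc]
  have hB'_eq : (1 + q • Aa) * Bb = q • (Aa * Y) := by
    rw [hBb_def, mul_smul_comm]
    congr 1
    calc (1 + q • Aa) * (X * Ring.inverse (1 + q • X + q • Y) * Y)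
        = (((1 + q • Aa) * X) * Ring.inverse (1 + q • X + q • Y)) * Y := by
          rw [mul_assoc, mul_assoc, mul_assoc]
      _ = ((X * ((1 + q • X + (q^3 : ℂ) • Y) * Ring.inverse (1 + (q^3 : ℂ) • Y)))
            * Ring.inverse (1 + q • X + q • Y)) * Y := by rw [hstep_a2]
      _ = (X * ((1 + q • X + (q^3 : ℂ) • Y) * (Ring.inverse (1 + (q^3 : ℂ) • Y)
            * Ring.inverse (1 + q • X + q • Y)))) * Y := by
          rw [mul_assoc X, mul_assoc ((1:A) + q • X + (q^3 : ℂ) • Y)]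
      _ = (X * ((1 + q • X + (q^3 : ℂ) • Y) * (Ring.inverse (1 + q • X + (q^3 : ℂ) • Y)
            * Ring.inverse (1 + q • Y)))) * Y := by rw [hinv1]
      _ = Aa * Y := by
          rw [← mul_assoc ((1:A) + q • X + (q^3 : ℂ) • Y), Ring.mul_inverse_cancel _ hw'U,
            one_mul, hAa_def]
  -- F2 : Aa + (1 + q•Aa) * Bb = X
  have hF2 : Aa + (1 + q • Aa) * Bb = X := by
    rw [hB'_eq]
    calc Aa + q • (Aa * Y) = Aa * (1 + q • Y) := by
          rw [mul_add, mul_one, mul_smul_comm]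
      _ = X := by rw [hAa_def, Ring.inverse_mul_cancel_right _ _ hvU]
  -- F3 : B' and Aa q-commute
  have hF3 : ((1 + q • Aa) * Bb) * Aa = (q^2 : ℂ) • (Aa * ((1 + q • Aa) * Bb)) := by
    rw [hB'_eq, smul_mul_assoc, mul_assoc, hYAa, mul_smul_comm, mul_smul_comm, smul_smul,
      smul_smul, ← mul_assoc]
    congr 1
    ring
  -- F1 : Bb and Aa q-commute
  have hF1 : Bb * Aa = (q^2 : ℂ) • (Aa * Bb) := by
    have e1 : Aa * Bb = q • ((X * X) * (Ring.inverse (1 + (q^3 : ℂ) • Y)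
        * Ring.inverse (1 + q • X + q • Y)) * Y) := by
      rw [hBb_def, mul_smul_comm]
      congr 1
      calc Aa * (X * Ring.inverse (1 + q • X + q • Y) * Y)
          = ((Aa * X) * Ring.inverse (1 + q • X + q • Y)) * Y := by
            rw [mul_assoc Aa, ← mul_assoc Aa]
        _ = ((X * X * Ring.inverse (1 + (q^3 : ℂ) • Y)) * Ring.inverse (1 + q • X + q • Y)) * Y := by
            rw [hAaX]
        _ = (X * X) * (Ring.inverse (1 + (q^3 : ℂ) • Y) * Ring.inverse (1 + q • X + q • Y)) * Y := by
            rw [mul_assoc (X * X)]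
    have e2 : Bb * Aa = (q * q^2 : ℂ) • ((X * X) * (Ring.inverse (1 + q • X + (q^3 : ℂ) • Y)
        * Ring.inverse (1 + q • Y)) * Y) := by
      rw [hBb_def, smul_mul_assoc]
      rw [show X * Ring.inverse (1 + q • X + q • Y) * Y * Aa
          = (X * Ring.inverse (1 + q • X + q • Y)) * (Y * Aa) from by rw [mul_assoc]]
      rw [hYAa, mul_smul_comm, smul_smul]
      congr 1
      calc (X * Ring.inverse (1 + q • X + q • Y)) * (Aa * Y)
          = (((X * Ring.inverse (1 + q • X + q • Y)) * X) * Ring.inverse (1 + q • Y)) * Y := by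
            rw [hAa_def, ← mul_assoc, ← mul_assoc]
        _ = ((X * X * Ring.inverse (1 + q • X + (q^3 : ℂ) • Y)) * Ring.inverse (1 + q • Y)) * Y := by
            rw [hXwX]
        _ = (X * X) * (Ring.inverse (1 + q • X + (q^3 : ℂ) • Y) * Ring.inverse (1 + q • Y)) * Y := by
            rw [mul_assoc (X * X)]
    rw [e1, e2, ← hinv1, smul_smul]
    congr 1
    ring
  -- norm of B'
  have hnormB' : ‖(1 + q • Aa) * Bb‖ < 1/6 := by
    rw [hB'_eq, norm_smul]
    have h1 : ‖Aa * Y‖ ≤ ‖Aa‖ * ‖Y‖ := norm_mul_le _ _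
    nlinarith [norm_nonneg (Aa * Y), norm_nonneg Aa, norm_nonneg Y, norm_nonneg q]
  have hqB' : ‖q‖ * ‖(1 + q • Aa) * Bb‖ < 1 := by
    nlinarith [norm_nonneg ((1 + q • Aa) * Bb), norm_nonneg q]
  -- psi units
  have hAaU : IsUnit (quantumPsiB q Aa) := psi_isUnit hq0 hq1 Aa (by linarith)
  have hXU : IsUnit (quantumPsiB q X) := psi_isUnit hq0 hq1 X hnX1
  have hYU : IsUnit (quantumPsiB q Y) := psi_isUnit hq0 hq1 Y hnY1
  have hB'U : IsUnit (quantumPsiB q ((1 + q • Aa) * Bb)) := psi_isUnit hq0 hq1 _ (by linarith)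
  set ua : Aˣ := hAaU.unit with hua_def
  have hua : (↑ua : A) = quantumPsiB q Aa := hAaU.unit_spec
  -- conjugation of Bb by psi Aa
  have hBrel : Bb * quantumPsiB q Aa = quantumPsiB q Aa * ((1 + q • Aa) * Bb) := by
    calc Bb * quantumPsiB q Aa = quantumPsiB q ((q^2 : ℂ) • Aa) * Bb :=
          psi_lmove hq1 hF1 hqAa
      _ = ((1 + q • Aa) * quantumPsiB q Aa) * Bb := by rw [psi_funct hq1 Aa hqAa]
      _ = (quantumPsiB q Aa * (1 + q • Aa)) * Bb := by rw [psi_comm_one_add hq1 Aa hqAa]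
      _ = quantumPsiB q Aa * ((1 + q • Aa) * Bb) := by rw [mul_assoc]
  have hBconj : Bb = ↑ua * ((1 + q • Aa) * Bb) * ↑ua⁻¹ := by
    apply (Units.eq_mul_inv_iff_mul_eq _).mpr
    rw [hua]
    exact hBrel
  have hpsiBb : quantumPsiB q Bb = ↑ua * quantumPsiB q ((1 + q • Aa) * Bb) * ↑ua⁻¹ := by
    conv_lhs => rw [hBconj]
    exact psi_conj hq1 ua _ hqB'
  have hBbU : IsUnit (quantumPsiB q Bb) := by
    rw [hpsiBb]
    exact (ua.isUnit.mul hB'U).mul ua⁻¹.isUnit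
  have hG2 : quantumPsiB q Bb * quantumPsiB q Aa = quantumPsiB q X := by
    calc quantumPsiB q Bb * quantumPsiB q Aa
        = (↑ua * quantumPsiB q ((1 + q • Aa) * Bb) * ↑ua⁻¹) * ↑ua := by rw [hpsiBb, hua]
      _ = ↑ua * quantumPsiB q ((1 + q • Aa) * Bb) * (↑ua⁻¹ * ↑ua) := by rw [mul_assoc]
      _ = ↑ua * quantumPsiB q ((1 + q • Aa) * Bb) := by rw [Units.inv_mul, mul_one]
      _ = quantumPsiB q Aa * quantumPsiB q ((1 + q • Aa) * Bb) := by rw [hua]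
      _ = quantumPsiB q (Aa + (1 + q • Aa) * Bb) :=
          psi_merge hq1 hF3 (by linarith) (by linarith) (by linarith)
      _ = quantumPsiB q X := by rw [hF2]
  -- conjugation of Y by psi X
  have hCrel : Cc * quantumPsiB q X = quantumPsiB q X * Y := by
    calc Cc * quantumPsiB q X
        = Ring.inverse (1 + q • X) * (Y * quantumPsiB q X) := by rw [hCc_def, mul_assoc]
      _ = Ring.inverse (1 + q • X) * (quantumPsiB q ((q^2 : ℂ) • X) * Y) := by
          rw [psi_lmove hq1 hXY hqX1]
      _ = Ring.inverse (1 + q • X) * (((1 + q • X) * quantumPsiB q X) * Y) := by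
          rw [psi_funct hq1 X hqX1]
      _ = Ring.inverse (1 + q • X) * ((1 + q • X) * (quantumPsiB q X * Y)) := by
          rw [mul_assoc]
      _ = quantumPsiB q X * Y := Ring.inverse_mul_cancel_left _ _ huU
  set ux : Aˣ := hXU.unit with hux_def
  have hux : (↑ux : A) = quantumPsiB q X := hXU.unit_spec
  have hCconj : Cc = ↑ux * Y * ↑ux⁻¹ := by
    apply (Units.eq_mul_inv_iff_mul_eq _).mpr
    rw [hux]
    exact hCrel
  have hpsiCc : quantumPsiB q Cc = ↑ux * quantumPsiB q Y * ↑ux⁻¹ := by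
    conv_lhs => rw [hCconj]
    exact psi_conj hq1 ux Y hqY1
  have hCcU : IsUnit (quantumPsiB q Cc) := by
    rw [hpsiCc]
    exact (ux.isUnit.mul hYU).mul ux⁻¹.isUnit
  have hCX : quantumPsiB q Cc * quantumPsiB q X = quantumPsiB q X * quantumPsiB q Y := by
    calc quantumPsiB q Cc * quantumPsiB q X
        = (↑ux * quantumPsiB q Y * ↑ux⁻¹) * ↑ux := by rw [hpsiCc, hux]
      _ = ↑ux * quantumPsiB q Y * (↑ux⁻¹ * ↑ux) := by rw [mul_assoc]
      _ = ↑ux * quantumPsiB q Y := by rw [Units.inv_mul, mul_one]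
      _ = quantumPsiB q X * quantumPsiB q Y := by rw [hux]
  have hfinal : quantumPsiB q Cc * (quantumPsiB q Bb * quantumPsiB q Aa)
      = quantumPsiB q X * quantumPsiB q Y := by
    rw [hG2]
    exact hCX
  refine ⟨hvU, huU, hwU, by linarith, by linarith, by linarith, hnX1, hnY1, hAaU, hBbU,
    hCcU, ?_⟩
  have hgoal : Ring.inverse (quantumPsiB q Aa) * (Ring.inverse (quantumPsiB q Bb) *
      (Ring.inverse (quantumPsiB q Cc) * (quantumPsiB q X * quantumPsiB q Y))) = 1 := by
    rw [← hfinal, Ring.inverse_mul_cancel_left _ _ hCcU,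
      Ring.inverse_mul_cancel_left _ _ hBbU, Ring.inverse_mul_cancel _ hAaU]
  calc Ring.inverse (quantumPsiB q Aa) * Ring.inverse (quantumPsiB q Bb) *
      Ring.inverse (quantumPsiB q Cc) * quantumPsiB q X * quantumPsiB q Y
      = Ring.inverse (quantumPsiB q Aa) * (Ring.inverse (quantumPsiB q Bb) *
        (Ring.inverse (quantumPsiB q Cc) * (quantumPsiB q X * quantumPsiB q Y))) := by
        simp only [mul_assoc]
    _ = 1 := hgoal
end

section
/- Special Baker–Campbell–Hausdorff identity: let 𝒜 be a complex unital Banach algebra and A, B ∈ 𝒜. Set C = A·B − B·A, and assume C·A = A·C and C·B = B·C. Then exp(A)·exp(B) = exp(C/2)·exp(A+B). -/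
set_option maxHeartbeats 1000000

open NormedSpace

theorem bch_conj_move {𝒜 : Type*} [NormedRing 𝒜] [NormedAlgebra ℂ 𝒜] [CompleteSpace 𝒜]
    (x y c : 𝒜) (h : x * y - y * x = c) (hc : x * c = c * x) (t : ℂ) :
    exp (t • x) * y = (y + t • c) * exp (t • x) := by
  have hinv : ∀ s : ℂ, exp (s • x) * exp ((-s) • x) = 1 := by
    intro s
    rw [← exp_add_of_commute_of_mem_ball (𝕂 := ℂ) (((Commute.refl x).smul_left s).smul_right (-s)) ((expSeries_radius_eq_top ℂ 𝒜).symm ▸ edist_lt_top _ _) ((expSeries_radius_eq_top ℂ 𝒜).symm ▸ edist_lt_top _ _)]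
    simp
  have hinv' : ∀ s : ℂ, exp ((-s) • x) * exp (s • x) = 1 := by
    intro s
    rw [← exp_add_of_commute_of_mem_ball (𝕂 := ℂ) (((Commute.refl x).smul_left (-s)).smul_right s) ((expSeries_radius_eq_top ℂ 𝒜).symm ▸ edist_lt_top _ _) ((expSeries_radius_eq_top ℂ 𝒜).symm ▸ edist_lt_top _ _)]
    simp
  have hxE : ∀ s : ℂ, x * exp (s • x) = exp (s • x) * x :=
    fun s => (((Commute.refl x).smul_right s).exp_right).eq
  have hcx : Commute c x := hc.symm
  have hcE : ∀ s : ℂ, c * exp (s • x) = exp (s • x) * c :=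
    fun s => ((hcx.smul_right s).exp_right).eq
  have hmain : ∀ u : ℂ, exp (u • x) * y * exp ((-u) • x) = y + u • c := by
    have hderiv : ∀ u : ℂ,
        HasDerivAt (fun u : ℂ => exp (u • x) * y * exp ((-u) • x) - u • c) 0 u := by
      intro u
      have h1 : HasDerivAt (fun u : ℂ => exp (u • x)) (x * exp (u • x)) u :=
        hasDerivAt_exp_smul_const' x u
      have h2 : HasDerivAt (fun u : ℂ => exp ((-u) • x))
          ((-1 : ℂ) • (exp ((-u) • x) * x)) u :=
        (hasDerivAt_exp_smul_const x (-u)).scomp u (hasDerivAt_neg u)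
      have h3 : HasDerivAt (fun u : ℂ => u • c) c u := by
        simpa using (hasDerivAt_id u).smul_const c
      have h4 := ((h1.mul_const y).mul h2).sub h3
      set E := exp (u • x)
      set E' := exp ((-u) • x)
      have e1 : x * E * y * E' = E * (x * y) * E' := by rw [hxE u]; noncomm_ring
      have e2 : E * y * ((-1 : ℂ) • (E' * x)) = -(E * (y * x) * E') := by
        rw [neg_one_smul, show E' * x = x * E' from (hxE (-u)).symm]
        noncomm_ring
      have e3 : E * c = c * E := (hcE u).symm
      have key : x * E * y * E' + E * y * ((-1 : ℂ) • (E' * x)) - c = 0 := by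
        calc x * E * y * E' + E * y * ((-1 : ℂ) • (E' * x)) - c
            = E * (x * y) * E' - E * (y * x) * E' - c := by rw [e1, e2]; abel
          _ = E * c * E' - c := by rw [← h]; noncomm_ring
          _ = c * (E * E') - c := by rw [e3, mul_assoc]
          _ = 0 := by rw [hinv u, mul_one, sub_self]
      exact key ▸ h4
    intro u
    have hcst := is_const_of_deriv_eq_zero
      (fun v => (hderiv v).differentiableAt) (fun v => (hderiv v).deriv) u 0
    simp only [zero_smul, exp_zero, one_mul, mul_one, sub_zero, neg_zero] at hcst
    rw [sub_eq_iff_eq_add] at hcst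
    exact hcst
  have hinv'' : exp (-(t • x)) * exp (t • x) = 1 := by
    simpa [neg_smul] using hinv' t
  have := congrArg (· * exp (t • x)) (hmain t)
  simpa [mul_assoc, hinv''] using this

/-- Special Baker–Campbell–Hausdorff identity: in a complex unital Banach algebra,
if `C = AB - BA` commutes with both `A` and `B`, then
`exp(A) exp(B) = exp(C/2) exp(A+B)`. -/
theorem special_bch {𝒜 : Type*} [NormedRing 𝒜] [NormedAlgebra ℂ 𝒜] [CompleteSpace 𝒜]
    (A B : 𝒜) (C : 𝒜) (hC : C = A * B - B * A)
    (hCA : C * A = A * C) (hCB : C * B = B * C) :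
    NormedSpace.exp A * NormedSpace.exp B =
      NormedSpace.exp ((1 / 2 : ℂ) • C) * NormedSpace.exp (A + B) := by
  have hCD : C * (A + B) = (A + B) * C := by rw [mul_add, add_mul, hCA, hCB]
  -- move lemmas
  have mA : ∀ s : ℂ, exp (s • (A + B)) * A = (A + s • (-C)) * exp (s • (A + B)) :=
    fun s => bch_conj_move (A + B) A (-C)
      (by rw [hC]; noncomm_ring) (by rw [mul_neg, neg_mul, hCD]) s
  have mB : ∀ s : ℂ, exp (s • (A + B)) * B = (B + s • C) * exp (s • (A + B)) :=
    fun s => bch_conj_move (A + B) B C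
      (by rw [hC]; noncomm_ring) hCD.symm s
  have mAB : ∀ s : ℂ, exp (s • A) * B = (B + s • C) * exp (s • A) :=
    fun s => bch_conj_move A B C (by rw [hC]) hCA.symm s
  have hderiv : ∀ t : ℂ, HasDerivAt (fun t : ℂ => exp ((-t) • (A + B)) *
      (exp ((-(t ^ 2 / 2)) • C) * (exp (t • A) * exp (t • B)))) 0 t := by
    intro t
    have hd1 : HasDerivAt (fun t : ℂ => exp ((-t) • (A + B)))
        ((-1 : ℂ) • ((A + B) * exp ((-t) • (A + B)))) t :=
      (hasDerivAt_exp_smul_const' (A + B) (-t)).scomp t (hasDerivAt_neg t)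
    have hu : HasDerivAt (fun s : ℂ => -(s ^ 2 / 2)) (-t) t := by
      have := ((hasDerivAt_pow 2 t).div_const 2).fun_neg
      exact this.congr_deriv (by norm_num)
    have hd2 : HasDerivAt (fun s : ℂ => exp ((-(s ^ 2 / 2)) • C))
        ((-t) • (C * exp ((-(t ^ 2 / 2)) • C))) t :=
      by exact (hasDerivAt_exp_smul_const' C (-(t ^ 2 / 2))).scomp t hu
    have hd3 : HasDerivAt (fun t : ℂ => exp (t • A)) (A * exp (t • A)) t :=
      hasDerivAt_exp_smul_const' A t
    have hd4 : HasDerivAt (fun t : ℂ => exp (t • B)) (B * exp (t • B)) t :=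
      hasDerivAt_exp_smul_const' B t
    have hdh := hd1.mul (hd2.mul (hd3.mul hd4))
    set e1 := exp ((-t) • (A + B)) with he1
    set e2 := exp ((-(t ^ 2 / 2)) • C) with he2
    set e3 := exp (t • A) with he3
    set e4 := exp (t • B) with he4
    -- pointwise move lemmas
    have pA : ∀ z : 𝒜, e1 * (A * z) = A * (e1 * z) + t • (C * (e1 * z)) := by
      intro z
      rw [← mul_assoc, mA (-t), ← he1]
      simp only [smul_neg, neg_smul, neg_neg, add_mul, smul_mul_assoc, mul_assoc]
    have pB1 : ∀ z : 𝒜, e1 * (B * z) = B * (e1 * z) - t • (C * (e1 * z)) := by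
      intro z
      rw [← mul_assoc, mB (-t), ← he1]
      simp only [neg_smul, add_mul, neg_mul, smul_mul_assoc, mul_assoc]
      abel
    have pB3 : ∀ z : 𝒜, e3 * (B * z) = B * (e3 * z) + t • (C * (e3 * z)) := by
      intro z
      rw [← mul_assoc, mAB t, ← he3]
      simp only [add_mul, smul_mul_assoc, mul_assoc]
    have cAC : Commute A C := hCA.symm
    have cBC : Commute B C := hCB.symm
    have cAe2 : A * e2 = e2 * A := ((cAC.smul_right _).exp_right).eq
    have cBe2 : B * e2 = e2 * B := ((cBC.smul_right _).exp_right).eq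
    have cCe1 : C * e1 = e1 * C :=
      ((((show Commute C (A + B) from hCD)).smul_right (-t)).exp_right).eq
    have cCe2 : C * e2 = e2 * C := (((Commute.refl C).smul_right _).exp_right).eq
    have pA2 : ∀ z : 𝒜, e2 * (A * z) = A * (e2 * z) := fun z => by
      rw [← mul_assoc, ← cAe2, mul_assoc]
    have pB2 : ∀ z : 𝒜, e2 * (B * z) = B * (e2 * z) := fun z => by
      rw [← mul_assoc, ← cBe2, mul_assoc]
    have pC1 : ∀ z : 𝒜, e1 * (C * z) = C * (e1 * z) := fun z => by
      rw [← mul_assoc, ← cCe1, mul_assoc]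
    have pC2 : ∀ z : 𝒜, e2 * (C * z) = C * (e2 * z) := fun z => by
      rw [← mul_assoc, ← cCe2, mul_assoc]
    have hzero : (-1 : ℂ) • ((A + B) * e1) * (e2 * (e3 * e4)) +
        e1 * ((-t) • (C * e2) * (e3 * e4) + e2 * (A * e3 * e4 + e3 * (B * e4))) = 0 := by
      simp only [neg_one_smul, neg_smul, neg_mul, mul_neg, mul_add, add_mul, smul_add,
        smul_mul_assoc, mul_smul_comm, mul_assoc, pA, pB1, pB3, pA2, pB2, pC1, pC2]
      simp only [one_smul, neg_one_smul]
      abel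
    exact hzero ▸ hdh
  have hval := is_const_of_deriv_eq_zero
    (fun v => (hderiv v).differentiableAt) (fun v => (hderiv v).deriv) 1 0
  have key : exp ((-1 : ℂ) • (A + B)) *
      (exp ((-(1 / 2) : ℂ) • C) * (exp A * exp B)) = 1 := by
    norm_num at hval
    simpa using hval
  have i1 : exp (A + B) * exp ((-1 : ℂ) • (A + B)) = 1 := by
    rw [← exp_add_of_commute_of_mem_ball (𝕂 := ℂ) ((Commute.refl (A + B)).smul_right (-1 : ℂ)) ((expSeries_radius_eq_top ℂ 𝒜).symm ▸ edist_lt_top _ _) ((expSeries_radius_eq_top ℂ 𝒜).symm ▸ edist_lt_top _ _),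
      show A + B + (-1 : ℂ) • (A + B) = 0 by rw [neg_one_smul, add_neg_cancel], exp_zero]
  have i2 : exp ((1 / 2 : ℂ) • C) * exp ((-(1 / 2) : ℂ) • C) = 1 := by
    rw [← exp_add_of_commute_of_mem_ball (𝕂 := ℂ) (((Commute.refl C).smul_left ((1 / 2 : ℂ))).smul_right (-(1 / 2 : ℂ))) ((expSeries_radius_eq_top ℂ 𝒜).symm ▸ edist_lt_top _ _) ((expSeries_radius_eq_top ℂ 𝒜).symm ▸ edist_lt_top _ _),
      ← add_smul]
    norm_num
  have k2 : exp ((-(1 / 2) : ℂ) • C) * (exp A * exp B) = exp (A + B) := by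
    conv_rhs => rw [← mul_one (exp (A + B)), ← key, ← mul_assoc, i1, one_mul]
  rw [← k2, ← mul_assoc, i2, one_mul]
end

section
/- Contour-independence and unitarity of Faddeev's quantum dilogarithm: let b > 0 be a real number and z ∈ ℝ. For δ ∈ (0, π·min(b, 1/b)) define I(δ) = ∫_{−∞}^{∞} e^{−2√−1·z·(x+√−1·δ)} / (sinh((x+√−1·δ)·b) · sinh((x+√−1·δ)/b)) · dx/(x+√−1·δ). Then (i) this integral converges absolutely for every such δ; (ii) I(δ) = I(δ′) for all δ, δ′ ∈ (0, π·min(b, 1/b)); and (iii) |exp(−I(δ)/4)| = 1, i.e. the real part of I(δ) is zero. -/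
open MeasureTheory Real

/-- The contour integral defining Faddeev's quantum dilogarithm: the integral of
`e^{-2√-1 z w} / (sinh(wb) sinh(w/b) w)` over the horizontal line `w = x + √-1 δ`,
`x ∈ ℝ`. -/
noncomputable def faddeevIntegral (b z δ : ℝ) : ℂ :=
  ∫ x : ℝ,
    Complex.exp (-2 * Complex.I * (z : ℂ) * ((x : ℂ) + Complex.I * (δ : ℂ))) /
      (Complex.sinh (((x : ℂ) + Complex.I * (δ : ℂ)) * (b : ℂ)) *
        Complex.sinh (((x : ℂ) + Complex.I * (δ : ℂ)) / (b : ℂ))) *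
      (1 / ((x : ℂ) + Complex.I * (δ : ℂ)))

open Complex

noncomputable def fadF (b z : ℝ) (w : ℂ) : ℂ :=
  Complex.exp (-2 * Complex.I * (z : ℂ) * w) /
    (Complex.sinh (w * (b : ℂ)) * Complex.sinh (w / (b : ℂ))) * (1 / w)

lemma sq_abs_sinh (u v : ℝ) :
    ‖Complex.sinh ((u : ℂ) + (v : ℂ) * Complex.I)‖ ^ 2
      = Real.sinh u ^ 2 + Real.sin v ^ 2 := by
  have h : Complex.sinh ((u : ℂ) + (v : ℂ) * Complex.I)
      = ((Real.sinh u * Real.cos v : ℝ) : ℂ) + ((Real.cosh u * Real.sin v : ℝ) : ℂ) * Complex.I := by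
    rw [Complex.sinh_add, Complex.sinh_mul_I, Complex.cosh_mul_I]
    push_cast; ring
  rw [h, Complex.sq_norm, Complex.normSq_add_mul_I]
  have h1 := Real.sin_sq_add_cos_sq v
  have h2 := Real.cosh_sq u
  nlinarith

lemma abs_sin_le_abs_sinh (u v : ℝ) :
    |Real.sin v| ≤ ‖Complex.sinh ((u : ℂ) + (v : ℂ) * Complex.I)‖ := by
  have h := sq_abs_sinh u v
  have h0 := norm_nonneg (Complex.sinh ((u : ℂ) + (v : ℂ) * Complex.I))
  nlinarith [_root_.sq_abs (Real.sin v), sq_nonneg (Real.sinh u), abs_nonneg (Real.sin v)]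

lemma abs_sinh_le_abs_sinh (u v : ℝ) :
    |Real.sinh u| ≤ ‖Complex.sinh ((u : ℂ) + (v : ℂ) * Complex.I)‖ := by
  have h := sq_abs_sinh u v
  have h0 := norm_nonneg (Complex.sinh ((u : ℂ) + (v : ℂ) * Complex.I))
  nlinarith [_root_.sq_abs (Real.sinh u), sq_nonneg (Real.sin v), abs_nonneg (Real.sinh u)]

lemma fadF_norm (b z x y : ℝ) :
    ‖fadF b z ((x : ℂ) + (y : ℂ) * Complex.I)‖ =
      Real.exp (2 * z * y) /
        (‖Complex.sinh (((x : ℂ) + (y : ℂ) * Complex.I) * b)‖ *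
          ‖Complex.sinh (((x : ℂ) + (y : ℂ) * Complex.I) / b)‖) *
        (1 / ‖(x : ℂ) + (y : ℂ) * Complex.I‖) := by
  have he : (-2 * Complex.I * (z : ℂ) * ((x : ℂ) + (y : ℂ) * Complex.I))
      = ((2 * z * y : ℝ) : ℂ) + ((-2 * z * x : ℝ) : ℂ) * Complex.I := by
    push_cast; ring_nf; rw [Complex.I_sq]; ring
  simp only [fadF, norm_mul, norm_div, norm_one, map_mul, map_div₀, map_one, he, Complex.norm_exp]
  norm_num [Complex.add_re]

lemma sinh_lower (c t : ℝ) (h : c ≤ t) :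
    (1 - Real.exp (-2 * c)) / 2 * Real.exp t ≤ Real.sinh t := by
  rw [Real.sinh_eq]
  have h1 : Real.exp (-t) ≤ Real.exp (-2 * c) * Real.exp t := by
    rw [← Real.exp_add]; exact Real.exp_le_exp.2 (by linarith)
  linarith

lemma sin_min (δ₁ δ₂ b : ℝ) (h1 : 0 < δ₁) (hle : δ₁ ≤ δ₂) (hb : 0 < b) (h2 : δ₂ * b < π) :
    ∃ s > 0, ∀ y ∈ Set.Icc δ₁ δ₂, s ≤ Real.sin (y * b) := by
  obtain ⟨y₁, hy₁, hmin⟩ := isCompact_Icc.exists_isMinOn (Set.nonempty_Icc.2 hle)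
    (Continuous.continuousOn (by fun_prop) : ContinuousOn (fun y : ℝ => Real.sin (y * b)) _)
  refine ⟨Real.sin (y₁ * b),
    Real.sin_pos_of_pos_of_lt_pi (by nlinarith [hy₁.1, mul_pos h1 hb]) (by nlinarith [hy₁.2]),
    fun y hy => hmin hy⟩


lemma aux_div_le {e E A B W a c d : ℝ} (he : e ≤ E) (he0 : 0 ≤ e) (ha : 0 < a) (hc : 0 < c)
    (hd : 0 < d) (hA : a ≤ A) (hB : c ≤ B) (hW : d ≤ W) :
    e / (A * B) * (1 / W) ≤ E / (a * c) * (1 / d) := by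
  have hA0 : 0 < A := ha.trans_le hA
  have hB0 : 0 < B := hc.trans_le hB
  have hW0 : 0 < W := hd.trans_le hW
  gcongr
  all_goals first
    | exact mul_pos ha hc
    | exact div_nonneg (he0.trans he) (mul_pos ha hc).le
    | exact he0.trans he
    | assumption

lemma aux_div_eq {E a c d X Y : ℝ} (ha : a ≠ 0) (hc : c ≠ 0) (hd : d ≠ 0) (hX : X ≠ 0)
    (hY : Y ≠ 0) :
    E / (a * X * (c * Y)) * (1 / d) = E / (a * c) * (1 / d) * (X * Y)⁻¹ := by
  field_simp
  try ring
  try tauto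

lemma fadF_bound (b : ℝ) (hb : 0 < b) (z δ₁ δ₂ : ℝ) (h1 : 0 < δ₁) (hle : δ₁ ≤ δ₂)
    (h2b : δ₂ * b < π) (h2b' : δ₂ * b⁻¹ < π) :
    ∃ C > 0, ∀ y ∈ Set.Icc δ₁ δ₂, ∀ x : ℝ,
      ‖fadF b z ((x : ℂ) + (y : ℂ) * Complex.I)‖ ≤ C * Real.exp (-(b + b⁻¹) * |x|) := by
  have hb' : (0:ℝ) < b⁻¹ := by positivity
  obtain ⟨s₁, hs₁, hs₁le⟩ := sin_min δ₁ δ₂ b h1 hle hb h2b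
  obtain ⟨s₂, hs₂, hs₂le⟩ := sin_min δ₁ δ₂ b⁻¹ h1 hle hb' h2b'
  set E := Real.exp (2 * |z| * δ₂) with hE
  have hEpos : 0 < E := Real.exp_pos _
  set c₁ := (1 - Real.exp (-2 * b)) / 2 with hc₁
  set c₂ := (1 - Real.exp (-2 * b⁻¹)) / 2 with hc₂
  have hc₁p : 0 < c₁ := by
    have : Real.exp (-2 * b) < 1 := Real.exp_lt_one_iff.2 (by linarith)
    simp [hc₁]; linarith
  have hc₂p : 0 < c₂ := by
    have : Real.exp (-2 * b⁻¹) < 1 := Real.exp_lt_one_iff.2 (by linarith)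
    simp [hc₂]; linarith
  set M := E / (s₁ * s₂) * (1 / δ₁) with hM
  set C := max (M * Real.exp (b + b⁻¹)) (E / (c₁ * c₂) * (1 / δ₁)) with hC
  have hMpos : 0 < M := by positivity
  have hCpos : 0 < C := lt_max_of_lt_left (by positivity)
  refine ⟨C, hCpos, fun y hy x => ?_⟩
  have hy1 : δ₁ ≤ y := hy.1
  have hy2 : y ≤ δ₂ := hy.2
  have hypos : 0 < y := lt_of_lt_of_le h1 hy1
  -- rewrite arguments
  have harg1 : ((x : ℂ) + (y : ℂ) * Complex.I) * (b : ℂ)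
      = ((x * b : ℝ) : ℂ) + ((y * b : ℝ) : ℂ) * Complex.I := by push_cast; ring
  have harg2 : ((x : ℂ) + (y : ℂ) * Complex.I) / (b : ℂ)
      = ((x * b⁻¹ : ℝ) : ℂ) + ((y * b⁻¹ : ℝ) : ℂ) * Complex.I := by
    rw [div_eq_mul_inv]; push_cast; ring
  have hEb : Real.exp (2 * z * y) ≤ E := by
    apply Real.exp_le_exp.2
    have : z * y ≤ |z| * δ₂ := by
      calc z * y ≤ |z| * y := by nlinarith [le_abs_self z, hypos.le]
        _ ≤ |z| * δ₂ := by nlinarith [abs_nonneg z]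
    linarith
  have hW : δ₁ ≤ ‖(x : ℂ) + (y : ℂ) * Complex.I‖ := by
    have him : ((x : ℂ) + (y : ℂ) * Complex.I).im = y := by simp
    calc δ₁ ≤ y := hy1
      _ ≤ |((x : ℂ) + (y : ℂ) * Complex.I).im| := by rw [him]; exact le_abs_self y
      _ ≤ ‖_‖ := Complex.abs_im_le_norm _
  rw [fadF_norm, harg1, harg2]
  rcases le_or_gt |x| 1 with hx | hx
  · -- small x: use sin lower bounds
    have hA : s₁ ≤ ‖Complex.sinh (((x * b : ℝ) : ℂ) + ((y * b : ℝ) : ℂ) * Complex.I)‖ :=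
      le_trans (le_trans (hs₁le y hy) (le_abs_self _)) (abs_sin_le_abs_sinh _ _)
    have hB : s₂ ≤ ‖Complex.sinh (((x * b⁻¹ : ℝ) : ℂ) + ((y * b⁻¹ : ℝ) : ℂ) * Complex.I)‖ :=
      le_trans (le_trans (hs₂le y hy) (le_abs_self _)) (abs_sin_le_abs_sinh _ _)
    calc Real.exp (2 * z * y) / (‖_‖ * ‖_‖) * (1 / ‖_‖)
        ≤ E / (s₁ * s₂) * (1 / δ₁) := by gcongr <;> positivity
      _ = M := hM.symm
      _ ≤ C * Real.exp (-(b + b⁻¹) * |x|) := by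
          have h3 : M * Real.exp (b + b⁻¹) ≤ C := le_max_left _ _
          have h4 : Real.exp (-(b + b⁻¹)) ≤ Real.exp (-(b + b⁻¹) * |x|) := by
            apply Real.exp_le_exp.2; nlinarith [abs_nonneg x]
          calc M = M * Real.exp (b + b⁻¹) * Real.exp (-(b + b⁻¹)) := by
                rw [mul_assoc, ← Real.exp_add, show b + b⁻¹ + -(b + b⁻¹) = 0 by ring,
                  Real.exp_zero, mul_one]
            _ ≤ C * Real.exp (-(b + b⁻¹) * |x|) := by
                apply mul_le_mul h3 h4 (Real.exp_pos _).le hCpos.le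
  · -- large x: use sinh lower bounds
    have hA : c₁ * Real.exp (b * |x|) ≤
        ‖Complex.sinh (((x * b : ℝ) : ℂ) + ((y * b : ℝ) : ℂ) * Complex.I)‖ := by
      refine le_trans ?_ (abs_sinh_le_abs_sinh _ _)
      rw [Real.abs_sinh, abs_mul, abs_of_pos hb]
      have := sinh_lower b (|x| * b) (by nlinarith)
      calc c₁ * Real.exp (b * |x|) = (1 - Real.exp (-2 * b)) / 2 * Real.exp (|x| * b) := by
            rw [hc₁]; ring_nf
        _ ≤ Real.sinh (|x| * b) := this
    have hB : c₂ * Real.exp (b⁻¹ * |x|) ≤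
        ‖Complex.sinh (((x * b⁻¹ : ℝ) : ℂ) + ((y * b⁻¹ : ℝ) : ℂ) * Complex.I)‖ := by
      refine le_trans ?_ (abs_sinh_le_abs_sinh _ _)
      rw [Real.abs_sinh, abs_mul, abs_of_pos hb']
      have := sinh_lower b⁻¹ (|x| * b⁻¹) (by nlinarith)
      calc c₂ * Real.exp (b⁻¹ * |x|) = (1 - Real.exp (-2 * b⁻¹)) / 2 * Real.exp (|x| * b⁻¹) := by
            rw [hc₂]; ring_nf
        _ ≤ Real.sinh (|x| * b⁻¹) := this
    have step1 := aux_div_le hEb (Real.exp_pos _).le (by positivity : (0:ℝ) < c₁ * Real.exp (b * |x|))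
      (by positivity : (0:ℝ) < c₂ * Real.exp (b⁻¹ * |x|)) h1 hA hB hW
    have e1 : Real.exp (b * |x|) * Real.exp (b⁻¹ * |x|) = Real.exp ((b + b⁻¹) * |x|) := by
      rw [← Real.exp_add]; ring_nf
    have e2 : Real.exp (-(b + b⁻¹) * |x|) = (Real.exp ((b + b⁻¹) * |x|))⁻¹ := by
      rw [← Real.exp_neg]; ring_nf
    have step2 : E / (c₁ * Real.exp (b * |x|) * (c₂ * Real.exp (b⁻¹ * |x|))) * (1 / δ₁)
        = E / (c₁ * c₂) * (1 / δ₁) * Real.exp (-(b + b⁻¹) * |x|) := by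
      rw [aux_div_eq hc₁p.ne' hc₂p.ne' h1.ne' (Real.exp_pos _).ne' (Real.exp_pos _).ne', e1, e2]
    refine step1.trans ?_
    rw [step2]
    exact mul_le_mul_of_nonneg_right (le_max_right _ _) (Real.exp_pos _).le

lemma integrable_exp_neg_abs (a : ℝ) (ha : 0 < a) :
    Integrable (fun x : ℝ => Real.exp (-a * |x|)) := by
  have h1 : IntegrableOn (fun x : ℝ => Real.exp (-a * |x|)) (Set.Ici 0) := by
    rw [integrableOn_Ici_iff_integrableOn_Ioi]
    exact (exp_neg_integrableOn_Ioi 0 ha).congr_fun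
      (fun x hx => by rw [abs_of_pos hx]) measurableSet_Ioi
  have hmp : MeasurePreserving (fun x : ℝ => -x) volume volume :=
    Measure.measurePreserving_neg _
  have h2 : IntegrableOn (fun x : ℝ => Real.exp (-a * |x|)) (Set.Iic 0) := by
    have h3 := (hmp.integrableOn_comp_preimage
      (MeasurableEquiv.neg ℝ).measurableEmbedding).2 h1
    have hpre : (fun x : ℝ => -x) ⁻¹' (Set.Ici 0) = Set.Iic 0 := by
      ext x; simp
    have hfun : ((fun x : ℝ => Real.exp (-a * |x|)) ∘ (fun x : ℝ => -x))
        = fun x : ℝ => Real.exp (-a * |x|) := funext fun x => by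
      simp [Function.comp, abs_neg]
    rwa [hpre, hfun] at h3
  rw [← integrableOn_univ, ← Set.Iic_union_Ici (a := (0:ℝ))]
  exact h2.union h1

lemma sinh_arg_ne (b : ℝ) (hb : 0 < b) {w : ℂ} (h0 : 0 < w.im) (hπ : w.im * b < π) :
    Complex.sinh (w * (b : ℂ)) ≠ 0 := by
  intro hzero
  have harg : w * (b : ℂ) = ((w.re * b : ℝ) : ℂ) + ((w.im * b : ℝ) : ℂ) * Complex.I := by
    conv_lhs => rw [← Complex.re_add_im w]
    push_cast; ring
  have h := abs_sin_le_abs_sinh (w.re * b) (w.im * b)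
  rw [← harg, hzero] at h
  simp at h
  have := Real.sin_pos_of_pos_of_lt_pi (by positivity) hπ
  rw [h] at this; simp at this

lemma fadF_diffAt (b : ℝ) (hb : 0 < b) (z : ℝ) {w : ℂ} (h0 : 0 < w.im)
    (hπ : w.im * b < π) (hπ' : w.im * b⁻¹ < π) : DifferentiableAt ℂ (fadF b z) w := by
  have hw0 : w ≠ 0 := fun h => by simp [h] at h0
  have hs1 : Complex.sinh (w * (b : ℂ)) ≠ 0 := sinh_arg_ne b hb h0 hπ
  have hs2 : Complex.sinh (w / (b : ℂ)) ≠ 0 := by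
    have hb' : (0:ℝ) < b⁻¹ := by positivity
    have : w / (b : ℂ) = w * ((b⁻¹ : ℝ) : ℂ) := by
      push_cast; field_simp
    rw [this]
    exact sinh_arg_ne b⁻¹ hb' h0 hπ'
  apply DifferentiableAt.mul
  · apply DifferentiableAt.div
    · fun_prop
    · fun_prop
    · exact mul_ne_zero hs1 hs2
  · exact (differentiableAt_const 1).div differentiableAt_id hw0

lemma fadF_conj (b z : ℝ) (w : ℂ) :
    (starRingEnd ℂ) (fadF b z w) = - fadF b z (-((starRingEnd ℂ) w)) := by
  unfold fadF
  set u := (starRingEnd ℂ) w with hu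
  have h1 : (starRingEnd ℂ) (Complex.exp (-2 * Complex.I * (z : ℂ) * w))
      = Complex.exp (2 * Complex.I * (z : ℂ) * u) := by
    rw [← Complex.exp_conj]
    simp only [map_mul, map_neg, Complex.conj_I, Complex.conj_ofReal, map_ofNat, hu]
    ring_nf
  have h2 : (starRingEnd ℂ) (Complex.sinh (w * (b : ℂ))) = Complex.sinh (u * b) := by
    rw [← Complex.sinh_conj]; simp [hu]
  have h3 : (starRingEnd ℂ) (Complex.sinh (w / (b : ℂ))) = Complex.sinh (u / b) := by
    rw [← Complex.sinh_conj]; simp [hu]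
  rw [map_mul, map_div₀, map_mul, map_div₀, map_one, h1, h2, h3]
  rw [show (-u) * (b:ℂ) = -(u * b) by ring, show (-u) / (b:ℂ) = -(u / b) by ring,
    Complex.sinh_neg, Complex.sinh_neg, show -2 * Complex.I * (z:ℂ) * (-u) = 2 * Complex.I * z * u by ring]
  ring

lemma pi_bounds (b : ℝ) (hb : 0 < b) {δ : ℝ} (hδ : δ < π * min b b⁻¹) :
    δ * b < π ∧ δ * b⁻¹ < π := by
  have hb' : (0:ℝ) < b⁻¹ := by positivity
  have h1 : min b b⁻¹ ≤ b⁻¹ := min_le_right _ _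
  have h2 : min b b⁻¹ ≤ b := min_le_left _ _
  have h3 : π * min b b⁻¹ ≤ π * b⁻¹ := mul_le_mul_of_nonneg_left h1 Real.pi_pos.le
  have h4 : π * min b b⁻¹ ≤ π * b := mul_le_mul_of_nonneg_left h2 Real.pi_pos.le
  constructor
  · have : δ * b < π * b⁻¹ * b := by nlinarith
    rwa [mul_assoc, inv_mul_cancel₀ hb.ne', mul_one] at this
  · have : δ * b⁻¹ < π * b * b⁻¹ := by nlinarith
    rwa [mul_assoc, mul_inv_cancel₀ hb.ne', mul_one] at this

lemma fadF_cont (b : ℝ) (hb : 0 < b) (z : ℝ) {δ : ℝ}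
    (hδ : δ ∈ Set.Ioo 0 (π * min b b⁻¹)) :
    Continuous (fun x : ℝ => fadF b z ((x : ℂ) + (δ : ℂ) * Complex.I)) := by
  obtain ⟨hπ1, hπ2⟩ := pi_bounds b hb hδ.2
  rw [continuous_iff_continuousAt]
  intro x
  have him : ((x : ℂ) + (δ : ℂ) * Complex.I).im = δ := by simp
  have h1 : ContinuousAt (fadF b z) ((x : ℂ) + (δ : ℂ) * Complex.I) :=
    (fadF_diffAt b hb z (by rw [him]; exact hδ.1) (by rw [him]; exact hπ1)
      (by rw [him]; exact hπ2)).continuousAt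
  have h2 : ContinuousAt (fun x : ℝ => (x : ℂ) + (δ : ℂ) * Complex.I) x := by fun_prop
  exact ContinuousAt.comp (g := fadF b z)
    (f := fun x : ℝ => (x : ℂ) + (δ : ℂ) * Complex.I) h1 h2

lemma fadF_integrable (b : ℝ) (hb : 0 < b) (z : ℝ) {δ : ℝ}
    (hδ : δ ∈ Set.Ioo 0 (π * min b b⁻¹)) :
    Integrable (fun x : ℝ => fadF b z ((x : ℂ) + (δ : ℂ) * Complex.I)) := by
  obtain ⟨hπ1, hπ2⟩ := pi_bounds b hb hδ.2
  obtain ⟨C, hC, hCb⟩ := fadF_bound b hb z δ δ hδ.1 le_rfl hπ1 hπ2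
  have ha : (0:ℝ) < b + b⁻¹ := by positivity
  refine Integrable.mono' (((integrable_exp_neg_abs (b + b⁻¹) ha).const_mul C))
    (fadF_cont b hb z hδ).aestronglyMeasurable ?_
  filter_upwards with x
  exact hCb δ (Set.mem_Icc.2 ⟨le_rfl, le_rfl⟩) x

lemma fadF_contour (b : ℝ) (hb : 0 < b) (z : ℝ) {δ δ' : ℝ}
    (hδ : δ ∈ Set.Ioo 0 (π * min b b⁻¹)) (hδ' : δ' ∈ Set.Ioo 0 (π * min b b⁻¹)) :
    ∫ x : ℝ, fadF b z ((x : ℂ) + (δ : ℂ) * Complex.I)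
      = ∫ x : ℝ, fadF b z ((x : ℂ) + (δ' : ℂ) * Complex.I) := by
  have h1 : 0 < min δ δ' := lt_min hδ.1 hδ'.1
  have h2 : max δ δ' < π * min b b⁻¹ := max_lt hδ.2 hδ'.2
  have hle : min δ δ' ≤ max δ δ' := min_le_max
  obtain ⟨hπ1, hπ2⟩ := pi_bounds b hb h2
  obtain ⟨C, hC, hCb⟩ := fadF_bound b hb z (min δ δ') (max δ δ') h1 hle hπ1 hπ2
  have ha : (0:ℝ) < b + b⁻¹ := by positivity
  -- rectangle identity
  have rect : ∀ R : ℝ,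
      (∫ x in (-R : ℝ)..R, fadF b z ((x : ℂ) + (δ' : ℂ) * Complex.I)) =
      (∫ x in (-R : ℝ)..R, fadF b z ((x : ℂ) + (δ : ℂ) * Complex.I))
        + Complex.I • (∫ y in δ..δ', fadF b z ((R : ℂ) + (y : ℂ) * Complex.I))
        - Complex.I • (∫ y in δ..δ', fadF b z ((-R : ℂ) + (y : ℂ) * Complex.I)) := by
    intro R
    have hd : DifferentiableOn ℂ (fadF b z)
        (Set.uIcc (-R) R ×ℂ Set.uIcc δ δ') := by
      intro w hw
      rw [Complex.mem_reProdIm] at hw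
      have him : w.im ∈ Set.Icc (min δ δ') (max δ δ') := hw.2
      have h0w : 0 < w.im := lt_of_lt_of_le h1 him.1
      have hwb : w.im * b < π := by nlinarith [him.2]
      have hwb' : w.im * b⁻¹ < π := by nlinarith [him.2, inv_pos.2 hb]
      exact (fadF_diffAt b hb z h0w hwb hwb').differentiableWithinAt
    have key := Complex.integral_boundary_rect_eq_zero_of_differentiableOn (fadF b z)
      (-R + δ * Complex.I) (R + δ' * Complex.I)
      (by simpa using hd)
    simp only [neg_im, ofReal_im, neg_zero, zero_add, mul_im, I_im, ofReal_re, one_mul,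
      I_re, mul_zero, add_zero, neg_re, add_re, add_im, mul_re, sub_zero, zero_mul,
      mul_one, ofReal_neg] at key
    linear_combination -key
  -- limits
  have hIδ := fadF_integrable b hb z hδ
  have hIδ' := fadF_integrable b hb z hδ'
  have t1 : Filter.Tendsto (fun R : ℝ => ∫ x in (-R : ℝ)..R,
      fadF b z ((x : ℂ) + (δ : ℂ) * Complex.I)) Filter.atTop
      (nhds (∫ x : ℝ, fadF b z ((x : ℂ) + (δ : ℂ) * Complex.I))) :=
    intervalIntegral_tendsto_integral hIδ Filter.tendsto_neg_atTop_atBot Filter.tendsto_id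
  have t2 : Filter.Tendsto (fun R : ℝ => ∫ x in (-R : ℝ)..R,
      fadF b z ((x : ℂ) + (δ' : ℂ) * Complex.I)) Filter.atTop
      (nhds (∫ x : ℝ, fadF b z ((x : ℂ) + (δ' : ℂ) * Complex.I))) :=
    intervalIntegral_tendsto_integral hIδ' Filter.tendsto_neg_atTop_atBot Filter.tendsto_id
  -- vertical integrals vanish
  have hzero : Filter.Tendsto (fun R : ℝ => C * Real.exp (-(b + b⁻¹) * R) * |δ' - δ|)
      Filter.atTop (nhds 0) := by
    have he : Filter.Tendsto (fun R : ℝ => Real.exp (-(b + b⁻¹) * R)) Filter.atTop (nhds 0) := by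
      have h5 : Filter.Tendsto (fun R : ℝ => (b + b⁻¹) * R) Filter.atTop Filter.atTop :=
        Filter.Tendsto.const_mul_atTop ha Filter.tendsto_id
      have h6 : Filter.Tendsto (fun R : ℝ => Real.exp (-((b + b⁻¹) * R))) Filter.atTop
          (nhds 0) := Real.tendsto_exp_neg_atTop_nhds_zero.comp h5
      simpa only [neg_mul] using h6
    have := (he.const_mul C).mul_const |δ' - δ|
    simpa using this
  have hvert : ∀ (s : ℝ → ℝ), (∀ R : ℝ, 0 ≤ R → |s R| = R) →
      Filter.Tendsto (fun R : ℝ => Complex.I • ∫ y in δ..δ',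
        fadF b z ((s R : ℂ) + (y : ℂ) * Complex.I)) Filter.atTop (nhds 0) := by
    intro s hs
    apply squeeze_zero_norm' _ hzero
    filter_upwards [Filter.eventually_ge_atTop (0:ℝ)] with R hR
    have hnorm : ‖Complex.I • ∫ y in δ..δ', fadF b z ((s R : ℂ) + (y : ℂ) * Complex.I)‖
        = ‖∫ y in δ..δ', fadF b z ((s R : ℂ) + (y : ℂ) * Complex.I)‖ := by
      rw [norm_smul, Complex.norm_I, one_mul]
    rw [hnorm]
    apply intervalIntegral.norm_integral_le_of_norm_le_const
    intro y hy
    have hyIcc : y ∈ Set.Icc (min δ δ') (max δ δ') := Set.Ioc_subset_Icc_self hy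
    have := hCb y hyIcc (s R)
    rwa [hs R hR] at this
  refine tendsto_nhds_unique ?_ t2
  have : (fun R : ℝ => ∫ x in (-R : ℝ)..R, fadF b z ((x : ℂ) + (δ' : ℂ) * Complex.I))
      = fun R : ℝ => (∫ x in (-R : ℝ)..R, fadF b z ((x : ℂ) + (δ : ℂ) * Complex.I))
        + Complex.I • (∫ y in δ..δ', fadF b z ((R : ℂ) + (y : ℂ) * Complex.I))
        - Complex.I • (∫ y in δ..δ', fadF b z ((-R : ℂ) + (y : ℂ) * Complex.I)) :=
    funext rect
  rw [this]
  have v1 := hvert (fun R => R) (fun R hR => _root_.abs_of_nonneg hR)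
  have v2 := hvert (fun R => -R) (fun R hR => by rw [abs_neg, _root_.abs_of_nonneg hR])
  simpa using (t1.add v1).sub v2




lemma faddeev_eq_fadF (b z δ : ℝ) :
    faddeevIntegral b z δ = ∫ x : ℝ, fadF b z ((x : ℂ) + (δ : ℂ) * Complex.I) := by
  unfold faddeevIntegral fadF
  congr 1
  funext x
  rw [mul_comm Complex.I (δ : ℂ)]


/-- Contour-independence and unitarity of Faddeev's quantum dilogarithm: for real
`b > 0` and real `z`, the defining integral converges absolutely for every height
`δ ∈ (0, π·min(b, 1/b))`, is independent of `δ`, and `|exp(-I(δ)/4)| = 1`. -/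
theorem faddeev_unitarity (b : ℝ) (hb : 0 < b) (z : ℝ) :
    (∀ δ : ℝ, δ ∈ Set.Ioo 0 (π * min b b⁻¹) →
      Integrable (fun x : ℝ =>
        Complex.exp (-2 * Complex.I * (z : ℂ) * ((x : ℂ) + Complex.I * (δ : ℂ))) /
          (Complex.sinh (((x : ℂ) + Complex.I * (δ : ℂ)) * (b : ℂ)) *
            Complex.sinh (((x : ℂ) + Complex.I * (δ : ℂ)) / (b : ℂ))) *
          (1 / ((x : ℂ) + Complex.I * (δ : ℂ))))) ∧
    (∀ δ δ' : ℝ, δ ∈ Set.Ioo 0 (π * min b b⁻¹) → δ' ∈ Set.Ioo 0 (π * min b b⁻¹) →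
      faddeevIntegral b z δ = faddeevIntegral b z δ') ∧
    (∀ δ : ℝ, δ ∈ Set.Ioo 0 (π * min b b⁻¹) →
      ‖Complex.exp (-faddeevIntegral b z δ / 4)‖ = 1) := by
  refine ⟨?_, ?_, ?_⟩
  · intro δ hδ
    have h := fadF_integrable b hb z hδ
    have heq : (fun x : ℝ =>
        Complex.exp (-2 * Complex.I * (z : ℂ) * ((x : ℂ) + Complex.I * (δ : ℂ))) /
          (Complex.sinh (((x : ℂ) + Complex.I * (δ : ℂ)) * (b : ℂ)) *
            Complex.sinh (((x : ℂ) + Complex.I * (δ : ℂ)) / (b : ℂ))) *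
          (1 / ((x : ℂ) + Complex.I * (δ : ℂ))))
        = fun x : ℝ => fadF b z ((x : ℂ) + (δ : ℂ) * Complex.I) := by
      funext x
      unfold fadF
      rw [mul_comm Complex.I (δ : ℂ)]
    rw [heq]
    exact h
  · intro δ δ' hδ hδ'
    rw [faddeev_eq_fadF, faddeev_eq_fadF]
    exact fadF_contour b hb z hδ hδ'
  · intro δ hδ
    have hre : (faddeevIntegral b z δ).re = 0 := by
      rw [faddeev_eq_fadF]
      set J := ∫ x : ℝ, fadF b z ((x : ℂ) + (δ : ℂ) * Complex.I) with hJ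
      have h1 : ∀ x : ℝ, (starRingEnd ℂ) (fadF b z ((x : ℂ) + (δ : ℂ) * Complex.I))
          = - fadF b z ((((-x : ℝ)) : ℂ) + (δ : ℂ) * Complex.I) := by
        intro x
        rw [fadF_conj]
        congr 2
        simp [map_add, map_mul, Complex.conj_I, Complex.conj_ofReal]
        push_cast
        ring
      have h2 : (starRingEnd ℂ) J = -J := by
        rw [hJ, ← integral_conj]
        simp_rw [h1]
        rw [integral_neg]
        congr 1
        exact integral_neg_eq_self (fun t : ℝ => fadF b z ((t : ℂ) + (δ : ℂ) * Complex.I)) volume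
      have h3 := congrArg Complex.re h2
      simp only [Complex.conj_re, Complex.neg_re] at h3
      linarith
    rw [Complex.norm_exp,
      show -faddeevIntegral b z δ / 4 = ((-(1/4 : ℝ)) : ℂ) * faddeevIntegral b z δ by
        push_cast; ring]
    simp [Complex.mul_re, hre, Complex.ofReal_re, Complex.ofReal_im]
end
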